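/- arXiv:1010.5455 — 5 statements merged into one kernel-verified Lean document; each statement's English description precedes it below -/
import Mathlib

section
/- Let Ω ⊂ ℝⁿ be a bounded, open, connected set with Lipschitz boundary and let A ⊂ Ω be an open Lipschitz set with ∂A ≠ ∅. Let W : ℝᵐ → ℝ be a nonnegative C¹ potential with W(a) = 0 satisfying hypothesis (H) with radius r₀ > 0, and let r satisfy 0 < 2r < r₀. Suppose u : Ω → ℝᵐ is C¹ with finite energy J_Ω(u) < ∞ and |u(x) − a| ≤ r on ∂A ∩ Ω. Write ρ(x) = |u(x) − a| and n(x) = (u(x) − a)/|u(x) − a|, let α : [0, ∞) → ℝ be given by α(τ) = 1 for τ ≤ r, α(τ) = (2r − τ)/r for r ≤ τ ≤ 2r, and α(τ) = 0 for τ ≥ 2r, and define w : Ω → ℝᵐ by w(x) = a + r·α(ρ(x))·n(x) for x ∈ A with ρ(x) > r, and w(x) = u(x) otherwise. Then w = u on Ω \ A, |w(x) − a| ≤ r for all x ∈ A, w is differentiable almost everywhere with ∫_Ω ‖Dw‖² dx ≤ ∫_Ω ‖Du‖² dx, and ∫_Ω W(w(x)) dx ≤ ∫_Ω W(u(x)) dx,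 with J_Ω(w) < J_Ω(u) provided the set {x ∈ A : r < ρ(x) < 2r} has positive Lebesgue measure or ∫_{A⁺} W(u(x)) dx > 0, where A⁺ = {x ∈ A : ρ(x) > 2r}. -/
open MeasureTheory Set

/-- Hilbert–Schmidt (Frobenius) norm of a linear map between Euclidean spaces. -/
noncomputable def hsNorm {n m : ℕ}
    (L : EuclideanSpace ℝ (Fin n) →L[ℝ] EuclideanSpace ℝ (Fin m)) : ℝ :=
  Real.sqrt (∑ i : Fin n, ‖L (EuclideanSpace.single i 1)‖ ^ 2)

/-- The energy functional `J_Ω(v) = ∫_Ω ((1/2)‖Dv‖² + W(v)) dx`. -/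
noncomputable def energy {n m : ℕ} (Ω : Set (EuclideanSpace ℝ (Fin n)))
    (W : EuclideanSpace ℝ (Fin m) → ℝ)
    (v : EuclideanSpace ℝ (Fin n) → EuclideanSpace ℝ (Fin m)) : ℝ :=
  ∫ x in Ω, ((1 / 2 : ℝ) * hsNorm (fderiv ℝ v x) ^ 2 + W (v x))

/-- Hypothesis (H): `a` is a global minimum of `W` with `W a = 0`, and for every
unit vector `w` the function `λ ↦ W (a + λ w)` is strictly increasing on `[0, r₀)`. -/
def HypH {m : ℕ} (W : EuclideanSpace ℝ (Fin m) → ℝ)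
    (a : EuclideanSpace ℝ (Fin m)) (r₀ : ℝ) : Prop :=
  W a = 0 ∧ (∀ v, W a ≤ W v) ∧
    ∀ w : EuclideanSpace ℝ (Fin m), ‖w‖ = 1 →
      StrictMonoOn (fun t : ℝ => W (a + t • w)) (Set.Ico (0 : ℝ) r₀)

/-- A set has Lipschitz boundary: uniform interior cone condition at every
boundary point (the standard equivalent of being locally the hypograph of a
Lipschitz function). -/
def HasLipschitzBoundary {n : ℕ} (s : Set (EuclideanSpace ℝ (Fin n))) : Prop :=
  ∀ x ∈ frontier s, ∃ ν : EuclideanSpace ℝ (Fin n), ∃ ε c : ℝ,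
    ‖ν‖ = 1 ∧ 0 < ε ∧ 0 < c ∧
    ∀ y ∈ s ∩ Metric.ball x ε, ∀ t ∈ Set.Ioo (0 : ℝ) ε,
      Metric.ball (y + t • ν) (c * t) ⊆ s

/-- `v` is differentiable almost everywhere on `Ω`. -/
def DiffAEOn {n m : ℕ} (Ω : Set (EuclideanSpace ℝ (Fin n)))
    (v : EuclideanSpace ℝ (Fin n) → EuclideanSpace ℝ (Fin m)) : Prop :=
  ∀ᵐ x ∂(volume.restrict Ω), DifferentiableAt ℝ v x

/-- The point of `ℝ²` (as Euclidean space) with coordinates `x₁, x₂`. -/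
noncomputable def mk2 (x₁ x₂ : ℝ) : EuclideanSpace ℝ (Fin 2) := WithLp.toLp 2 ![x₁, x₂]

section Aux

open Metric Filter Asymptotics
open scoped Topology ENNReal RealInnerProductSpace

set_option maxHeartbeats 1000000

lemma density_fderiv_eq_zero {N : ℕ} {s : Set (EuclideanSpace ℝ (Fin N))}
    {f : EuclideanSpace ℝ (Fin N) → ℝ} {x : EuclideanSpace ℝ (Fin N)} {c : ℝ}
    (hd : Tendsto (fun ρ => volume (s ∩ closedBall x ρ) / volume (closedBall x ρ))
      (𝓝[>] (0:ℝ)) (𝓝 1))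
    (hf : DifferentiableAt ℝ f x) (hfx : f x = c) (hfs : ∀ y ∈ s, f y = c) :
    fderiv ℝ f x = 0 := by
  set L := fderiv ℝ f x with hLdef
  by_contra hL
  obtain ⟨v, hv⟩ : ∃ v, L v ≠ 0 := by
    by_contra h; push_neg at h; exact hL (ContinuousLinearMap.ext fun v => h v)
  have hv0 : v ≠ 0 := fun h => hv (by simp [h])
  set e := ‖v‖⁻¹ • v with he
  have hnev : ‖e‖ = 1 := by
    rw [he, norm_smul, norm_inv, norm_norm, inv_mul_cancel₀ (norm_ne_zero_iff.2 hv0)]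
  set δ := |L e| with hδdef
  have hδ : 0 < δ := by
    have : L e ≠ 0 := by
      rw [he, L.map_smul]
      simp only [smul_eq_mul, ne_eq, mul_eq_zero, inv_eq_zero, norm_eq_zero, not_or]
      exact ⟨hv0, hv⟩
    exact abs_pos.2 this
  have hlo := hf.hasFDerivAt.isLittleO
  have hev : ∀ᶠ y in 𝓝 x, ‖f y - f x - L (y - x)‖ ≤ δ/4 * ‖y - x‖ :=
    hlo.def (by positivity)
  obtain ⟨R, hR, hball⟩ := Metric.eventually_nhds_iff_ball.1 hev
  set ε := min 1 (δ / (4 * (‖L‖ + 1))) with hε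
  have hεpos : 0 < ε := lt_min one_pos (by positivity)
  have hε1 : ε ≤ 1 := min_le_left _ _
  have hεL : ‖L‖ * ε ≤ δ / 4 := by
    have h1 : ε ≤ δ / (4 * (‖L‖ + 1)) := min_le_right _ _
    have h2 : ‖L‖ * ε ≤ ‖L‖ * (δ / (4 * (‖L‖ + 1)) ) :=
      mul_le_mul_of_nonneg_left h1 (norm_nonneg _)
    have h3 : ‖L‖ * (δ / (4 * (‖L‖ + 1))) ≤ δ / 4 := by
      rw [mul_div_assoc']
      rw [div_le_div_iff₀ (by positivity) (by norm_num)]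
      have : 0 ≤ ‖L‖ := norm_nonneg _
      nlinarith
    linarith
  have hclaim : ∃ t : ℝ, 0 < t ∧ 2 * t < R ∧ (s ∩ ball (x + t • e) (ε * t)).Nonempty := by
    by_contra hcon
    push_neg at hcon
    set κ := ENNReal.ofReal ((ε / 4) ^ N) with hκ
    have hκpos : 0 < κ := by
      rw [hκ]; exact ENNReal.ofReal_pos.2 (by positivity)
    have hevr : ∀ᶠ ρ in 𝓝[>] (0:ℝ),
        volume (s ∩ closedBall x ρ) / volume (closedBall x ρ) ≤ 1 - κ := by
      filter_upwards [Ioo_mem_nhdsGT_of_mem (Set.left_mem_Ico.2 hR)] with ρ hρ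
      obtain ⟨hρ0, hρR⟩ := hρ
      set t := ρ / 2 with ht
      have ht0 : 0 < t := by positivity
      have h2t : 2 * t < R := by rw [ht]; linarith
      have hemp := hcon t ht0 h2t
      have hsub : ball (x + t • e) (ε * t) ⊆ closedBall x ρ := by
        intro y hy
        have h1 : dist y (x + t • e) < ε * t := mem_ball.1 hy
        have h2 : dist (x + t • e) x = t := by
          simp [dist_eq_norm, norm_smul, abs_of_pos ht0, hnev]
        have := dist_triangle y (x + t • e) x
        have hεt : ε * t ≤ t := by nlinarith
        have hρt : ρ = 2*t := by rw [ht]; ring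
        rw [mem_closedBall, hρt]
        linarith
      have hballvol : κ * volume (closedBall x ρ) ≤ volume (ball (x + t • e) (ε * t)) := by
        have h1 : closedBall (x + t • e) (ε * t / 2) ⊆ ball (x + t • e) (ε * t) :=
          closedBall_subset_ball (by nlinarith)
        have h2 : volume (closedBall (x + t • e) (ε * t / 2)) =
            ENNReal.ofReal ((ε * t / 2) ^ N) * volume (ball (0:EuclideanSpace ℝ (Fin N)) 1) := by
          rw [Measure.addHaar_closedBall _ _ (by positivity), finrank_euclideanSpace_fin]
        have h3 : volume (closedBall x ρ) =
            ENNReal.ofReal (ρ ^ N) * volume (ball (0:EuclideanSpace ℝ (Fin N)) 1) := by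
          rw [Measure.addHaar_closedBall _ _ (le_of_lt hρ0), finrank_euclideanSpace_fin]
        calc κ * volume (closedBall x ρ)
            = ENNReal.ofReal ((ε/4)^N) * (ENNReal.ofReal (ρ ^ N) * volume (ball (0:EuclideanSpace ℝ (Fin N)) 1)) := by rw [h3]
          _ = ENNReal.ofReal ((ε/4)^N * ρ^N) * volume (ball (0:EuclideanSpace ℝ (Fin N)) 1) := by
              rw [ENNReal.ofReal_mul (by positivity), mul_assoc]
          _ = volume (closedBall (x + t • e) (ε * t / 2)) := by
              rw [h2]; congr 2; rw [← mul_pow]; congr 1; rw [ht]; ring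
          _ ≤ volume (ball (x + t • e) (ε * t)) := measure_mono h1
      have hdisj : Disjoint (s ∩ closedBall x ρ) (ball (x + t • e) (ε * t)) := by
        rw [Set.disjoint_left]
        intro y hy1 hy2
        exact (Set.eq_empty_iff_forall_notMem.1 hemp y) ⟨hy1.1, hy2⟩
      have hadd : volume (s ∩ closedBall x ρ) + volume (ball (x + t • e) (ε * t))
          ≤ volume (closedBall x ρ) := by
        rw [← measure_union hdisj measurableSet_ball]
        exact measure_mono (Set.union_subset (Set.inter_subset_right) hsub)
      have hfin' : volume (closedBall x ρ) ≠ ⊤ := measure_closedBall_lt_top.ne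
      have hpos' : volume (closedBall x ρ) ≠ 0 := (measure_closedBall_pos volume x hρ0).ne'
      have hstep : volume (s ∩ closedBall x ρ) ≤ (1 - κ) * volume (closedBall x ρ) := by
        have h5 : volume (s ∩ closedBall x ρ) + κ * volume (closedBall x ρ)
            ≤ volume (closedBall x ρ) := le_trans (add_le_add_right hballvol _) hadd
        rw [ENNReal.sub_mul (fun _ _ => hfin'), one_mul]
        exact ENNReal.le_sub_of_add_le_right (ENNReal.mul_ne_top ENNReal.ofReal_ne_top hfin') h5
      calc volume (s ∩ closedBall x ρ) / volume (closedBall x ρ)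
          ≤ ((1 - κ) * volume (closedBall x ρ)) / volume (closedBall x ρ) :=
            ENNReal.div_le_div_right hstep _
        _ = (1 - κ) := by
            rw [mul_div_assoc, ENNReal.div_self hpos' hfin', mul_one]
    have hle : (1:ℝ≥0∞) ≤ 1 - κ := le_of_tendsto hd hevr
    have : (1:ℝ≥0∞) - κ < 1 := ENNReal.sub_lt_self ENNReal.one_ne_top one_ne_zero hκpos.ne'
    exact absurd (lt_of_le_of_lt hle this) (lt_irrefl _)
  obtain ⟨t, ht0, htR, y, hys, hyb⟩ := hclaim
  have hyx : ‖y - x‖ < 2 * t := by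
    have h1 : ‖y - (x + t • e)‖ < ε * t := mem_ball_iff_norm.1 hyb
    have h2 : ‖y - x‖ ≤ ‖y - (x + t • e)‖ + ‖t • e‖ := by
      have : y - x = (y - (x + t • e)) + t • e := by abel
      rw [this]; exact norm_add_le _ _
    have h3 : ‖t • e‖ = t := by rw [norm_smul, hnev, mul_one, Real.norm_eq_abs, abs_of_pos ht0]
    nlinarith
  have hyR : y ∈ ball x R := by
    rw [mem_ball_iff_norm]; linarith
  have hb1 : ‖f y - f x - L (y - x)‖ ≤ δ/4 * ‖y - x‖ := hball y hyR
  have hfy : f y = f x := by rw [hfs y hys, hfx]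
  have hb1' : ‖L (y - x)‖ ≤ δ/4 * (2 * t) := by
    rw [hfy] at hb1
    simp only [sub_self, zero_sub, norm_neg] at hb1
    calc ‖L (y - x)‖ ≤ δ/4 * ‖y - x‖ := hb1
      _ ≤ δ/4 * (2*t) := by nlinarith [norm_nonneg (y - x)]
  have hb2 : ‖L (y - x) - t * L e‖ ≤ δ/4 * t := by
    have h0 : L (y - x - t • e) = L (y - x) - t * L e := by
      rw [L.map_sub, L.map_smul, smul_eq_mul]
    rw [← h0]
    have h1 : ‖L (y - x - t • e)‖ ≤ ‖L‖ * ‖y - x - t • e‖ := L.le_opNorm _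
    have h2 : ‖y - x - t • e‖ < ε * t := by
      have : y - x - t • e = y - (x + t • e) := by abel
      rw [this]; exact mem_ball_iff_norm.1 hyb
    calc ‖L (y - x - t • e)‖ ≤ ‖L‖ * ‖y - x - t • e‖ := h1
      _ ≤ ‖L‖ * (ε * t) := by nlinarith [norm_nonneg L, norm_nonneg (y - x - t•e)]
      _ = (‖L‖ * ε) * t := by ring
      _ ≤ δ/4 * t := by nlinarith
  have hfinal : t * δ ≤ δ/4 * (2*t) + δ/4 * t := by
    have h1 : t * δ ≤ ‖L (y - x)‖ + ‖L (y - x) - t * L e‖ := by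
      calc t * δ = |t * L e| := by rw [abs_mul, abs_of_pos ht0, hδdef]
        _ = ‖L (y - x) - (L (y - x) - t * L e)‖ := by rw [Real.norm_eq_abs]; congr 1; ring
        _ ≤ ‖L (y - x)‖ + ‖L (y - x) - t * L e‖ := norm_sub_le _ _
    linarith
  nlinarith

lemma key_ineq {m : ℕ} (z ξ : EuclideanSpace ℝ (Fin m)) (r ρ₀ : ℝ)
    (hz : ‖z‖ = ρ₀) (h1 : r < ρ₀) (h2 : ρ₀ < 2 * r) (hr : 0 < r) :
    ‖(2 * r * ρ₀⁻¹ - 1) • ξ + (-(2 * r) * (ρ₀ ^ 3)⁻¹ * ⟪z, ξ⟫) • z‖ ≤ ‖ξ‖ := by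
  have hρ0 : 0 < ρ₀ := lt_trans hr h1
  set c₁ : ℝ := 2 * r * ρ₀⁻¹ - 1 with hc₁
  set c₂ : ℝ := -(2 * r) * (ρ₀ ^ 3)⁻¹ * ⟪z, ξ⟫ with hc₂
  have hCS : ⟪z, ξ⟫ ^ 2 ≤ (ρ₀^2) * ‖ξ‖^2 := by
    have := real_inner_mul_inner_self_le z ξ
    rw [real_inner_self_eq_norm_sq, real_inner_self_eq_norm_sq, hz] at this
    nlinarith [this]
  have hsq : ‖c₁ • ξ + c₂ • z‖ ^ 2 ≤ ‖ξ‖ ^ 2 := by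
    have hexp : ‖c₁ • ξ + c₂ • z‖ ^ 2
        = c₁^2 * ‖ξ‖^2 + 2 * (c₁ * c₂ * ⟪z, ξ⟫) + c₂^2 * ρ₀^2 := by
      rw [norm_add_sq_real]
      rw [real_inner_smul_left, real_inner_smul_right, norm_smul, norm_smul]
      rw [real_inner_comm ξ z]
      rw [mul_pow, mul_pow, Real.norm_eq_abs, Real.norm_eq_abs, sq_abs, sq_abs, hz]
      ring
    rw [hexp, hc₁, hc₂, ← sub_nonneg]
    have heq : ‖ξ‖^2 - ((2 * r * ρ₀⁻¹ - 1)^2 * ‖ξ‖^2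
        + 2 * ((2 * r * ρ₀⁻¹ - 1) * (-(2 * r) * (ρ₀ ^ 3)⁻¹ * ⟪z, ξ⟫) * ⟪z, ξ⟫)
        + (-(2 * r) * (ρ₀ ^ 3)⁻¹ * ⟪z, ξ⟫)^2 * ρ₀^2)
        = (ρ₀⁻¹)^4 * (4*r*(ρ₀-r)) * (ρ₀^2 * ‖ξ‖^2 - ⟪z, ξ⟫^2) := by
      field_simp
      ring
    rw [heq]
    apply mul_nonneg
    · apply mul_nonneg (by positivity)
      nlinarith
    · nlinarith [hCS]
  nlinarith [norm_nonneg (c₁ • ξ + c₂ • z), norm_nonneg ξ]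

lemma mid_hasFDeriv {n m : ℕ} {u : EuclideanSpace ℝ (Fin n) → EuclideanSpace ℝ (Fin m)}
    {a : EuclideanSpace ℝ (Fin m)} {r : ℝ} {x : EuclideanSpace ℝ (Fin n)}
    {U : EuclideanSpace ℝ (Fin n) →L[ℝ] EuclideanSpace ℝ (Fin m)}
    (hu : HasFDerivAt u U x) (hr : 0 < r) (h1 : r < ‖u x - a‖) :
    ∃ L : EuclideanSpace ℝ (Fin n) →L[ℝ] EuclideanSpace ℝ (Fin m),
      HasFDerivAt (fun y => a + (2 * r * (‖u y - a‖)⁻¹ - 1) • (u y - a)) L x ∧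
      ∀ v, L v = (2 * r * (‖u x - a‖)⁻¹ - 1) • (U v)
        + (-(2 * r) * ((‖u x - a‖) ^ 3)⁻¹ * ⟪u x - a, U v⟫) • (u x - a) := by
  set ρ₀ : ℝ := ‖u x - a‖ with hρ₀
  have hρpos : 0 < ρ₀ := lt_trans hr h1
  set z := u x - a with hz
  have hg : HasFDerivAt (fun y => u y - a) U x := hu.sub_const a
  have hq : HasFDerivAt (fun y => ‖u y - a‖ ^ 2) (2 • (innerSL ℝ z).comp U) x := hg.norm_sq
  have hφ : HasDerivAt (fun t : ℝ => 2 * r * (Real.sqrt t)⁻¹ - 1)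
      (2 * r * (-(1 / (2 * Real.sqrt (ρ₀^2))) / (Real.sqrt (ρ₀^2))^2)) (ρ₀^2) := by
    have h1' : HasDerivAt Real.sqrt (1 / (2 * Real.sqrt (ρ₀^2))) (ρ₀^2) :=
      Real.hasDerivAt_sqrt (by positivity)
    have h2' : HasDerivAt (fun t : ℝ => (Real.sqrt t)⁻¹)
        (-(1 / (2 * Real.sqrt (ρ₀^2))) / (Real.sqrt (ρ₀^2))^2) (ρ₀^2) := by
      apply h1'.inv
      rw [Real.sqrt_sq hρpos.le]; exact hρpos.ne'
    simpa using ((h2'.const_mul (2*r)).sub_const 1)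
  have hcomp := hφ.comp_hasFDerivAt_of_eq x hq rfl
  have hs : HasFDerivAt (fun y => 2 * r * (‖u y - a‖)⁻¹ - 1)
      ((2 * r * (-(1 / (2 * Real.sqrt (ρ₀^2))) / (Real.sqrt (ρ₀^2))^2)) • (2 • (innerSL ℝ z).comp U)) x := by
    apply hcomp.congr_of_eventuallyEq
    filter_upwards [] with y
    simp [Function.comp, Real.sqrt_sq (norm_nonneg (u y - a))]
  have hF := (hs.smul hg).const_add a
  refine ⟨_, hF, fun v => ?_⟩
  have hsqρ : Real.sqrt (ρ₀^2) = ρ₀ := Real.sqrt_sq hρpos.le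
  simp only [ContinuousLinearMap.add_apply, ContinuousLinearMap.smul_apply,
    ContinuousLinearMap.smulRight_apply, ContinuousLinearMap.comp_apply,
    ContinuousLinearMap.coe_smul', Pi.smul_apply, innerSL_apply_apply, hsqρ]
  rw [hz]
  congr 1
  congr 1
  have hne : ρ₀ ≠ 0 := hρpos.ne'
  simp only [smul_eq_mul, nsmul_eq_mul, Nat.cast_ofNat]
  field_simp

lemma hsNorm_le_hsNorm {n m : ℕ} {L M : EuclideanSpace ℝ (Fin n) →L[ℝ] EuclideanSpace ℝ (Fin m)}
    (h : ∀ v, ‖L v‖ ≤ ‖M v‖) : hsNorm L ≤ hsNorm M := by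
  apply Real.sqrt_le_sqrt
  apply Finset.sum_le_sum
  intro i _
  exact pow_le_pow_left₀ (norm_nonneg _) (h _) 2

lemma hsNorm_nonneg {n m : ℕ} (L : EuclideanSpace ℝ (Fin n) →L[ℝ] EuclideanSpace ℝ (Fin m)) :
    0 ≤ hsNorm L := Real.sqrt_nonneg _

lemma hsNorm_zero {n m : ℕ} : hsNorm (0 : EuclideanSpace ℝ (Fin n) →L[ℝ] EuclideanSpace ℝ (Fin m)) = 0 := by
  simp [hsNorm]

lemma continuous_hsNorm {n m : ℕ} :
    Continuous (fun L : EuclideanSpace ℝ (Fin n) →L[ℝ] EuclideanSpace ℝ (Fin m) => hsNorm L) := by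
  apply Real.continuous_sqrt.comp
  apply continuous_finset_sum
  intro i _
  exact ((ContinuousLinearMap.apply ℝ (EuclideanSpace ℝ (Fin m)) (EuclideanSpace.single i 1)).continuous.norm.pow 2)

end Aux

section Main
open Metric Filter Asymptotics
open scoped Topology ENNReal RealInnerProductSpace
set_option maxHeartbeats 1000000

theorem replacement_radial_reflection
    {n m : ℕ} (Ω A : Set (EuclideanSpace ℝ (Fin n)))
    (hΩopen : IsOpen Ω) (hΩbdd : Bornology.IsBounded Ω) (hΩconn : IsConnected Ω)
    (hΩlip : HasLipschitzBoundary Ω)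
    (hAopen : IsOpen A) (hAsub : A ⊆ Ω) (hAlip : HasLipschitzBoundary A)
    (hAfr : (frontier A).Nonempty)
    (W : EuclideanSpace ℝ (Fin m) → ℝ) (a : EuclideanSpace ℝ (Fin m)) (r₀ r : ℝ)
    (hWC1 : ContDiff ℝ 1 W) (hWnonneg : ∀ v, 0 ≤ W v)
    (hr₀ : 0 < r₀) (hH : HypH W a r₀)
    (hr : 0 < r) (hrr₀ : 2 * r < r₀)
    (u : EuclideanSpace ℝ (Fin n) → EuclideanSpace ℝ (Fin m))
    (huC1 : ContDiffOn ℝ 1 u Ω)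
    (hfin : IntegrableOn
      (fun x => (1 / 2 : ℝ) * hsNorm (fderiv ℝ u x) ^ 2 + W (u x)) Ω volume)
    (hbdry : ∀ x ∈ frontier A ∩ Ω, ‖u x - a‖ ≤ r)
    (α : ℝ → ℝ)
    (hα₁ : ∀ τ, 0 ≤ τ → τ ≤ r → α τ = 1)
    (hα₂ : ∀ τ, r ≤ τ → τ ≤ 2 * r → α τ = (2 * r - τ) / r)
    (hα₃ : ∀ τ, 2 * r ≤ τ → α τ = 0)
    (w : EuclideanSpace ℝ (Fin n) → EuclideanSpace ℝ (Fin m))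
    (hw : ∀ x,
      (x ∈ A ∧ r < ‖u x - a‖ →
        w x = a + (r * α ‖u x - a‖ / ‖u x - a‖) • (u x - a)) ∧
      (¬(x ∈ A ∧ r < ‖u x - a‖) → w x = u x)) :
    (∀ x ∈ Ω \ A, w x = u x) ∧
    (∀ x ∈ A, ‖w x - a‖ ≤ r) ∧
    DiffAEOn Ω w ∧
    (∫ x in Ω, hsNorm (fderiv ℝ w x) ^ 2) ≤ (∫ x in Ω, hsNorm (fderiv ℝ u x) ^ 2) ∧
    (∫ x in Ω, W (w x)) ≤ (∫ x in Ω, W (u x)) ∧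
    ((0 < volume {x ∈ A | r < ‖u x - a‖ ∧ ‖u x - a‖ < 2 * r} ∨
      0 < ∫ x in {x ∈ A | 2 * r < ‖u x - a‖}, W (u x)) →
      energy Ω W w < energy Ω W u) := by
  have hΩmeas : MeasurableSet Ω := hΩopen.measurableSet
  set ρf : EuclideanSpace ℝ (Fin n) → ℝ := fun x => ‖u x - a‖ with hρf
  have hucont : ContinuousOn u Ω := huC1.continuousOn
  have hρcont : ContinuousOn ρf Ω := (hucont.sub continuousOn_const).norm
  have hudiff : ∀ x ∈ Ω, DifferentiableAt ℝ u x := fun x hx =>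
    (huC1.contDiffAt (hΩopen.mem_nhds hx)).differentiableAt one_ne_zero
  have hwu : ∀ x, ¬(x ∈ A ∧ r < ρf x) → w x = u x := fun x => (hw x).2
  -- open sublevel/superlevel sets
  have hOlt : ∀ c : ℝ, IsOpen (Ω ∩ ρf ⁻¹' Set.Iio c) := fun c =>
    hρcont.isOpen_inter_preimage hΩopen isOpen_Iio
  have hOgt : ∀ c : ℝ, IsOpen (Ω ∩ ρf ⁻¹' Set.Ioi c) := fun c =>
    hρcont.isOpen_inter_preimage hΩopen isOpen_Ioi
  -- coefficient facts
  have hcoef : ∀ x, x ∈ A → r < ρf x → ρf x ≤ 2*r →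
      w x = a + ((2*r - ρf x) / ρf x) • (u x - a) := by
    intro x hxA h1 h2
    rw [(hw x).1 ⟨hxA, h1⟩, hα₂ _ (le_of_lt h1) h2]
    congr 2
    field_simp
    rfl
  have hwa : ∀ x, x ∈ A → 2*r ≤ ρf x → w x = a := by
    intro x hxA h2
    have h1 : r < ρf x := lt_of_lt_of_le (by linarith) h2
    rw [(hw x).1 ⟨hxA, h1⟩, hα₃ _ h2]
    simp
  -- conjunct 1
  have hC1 : ∀ x ∈ Ω \ A, w x = u x := fun x hx => (hw x).2 (fun h => hx.2 h.1)
  -- conjunct 2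
  have hC2 : ∀ x ∈ A, ‖w x - a‖ ≤ r := by
    intro x hxA
    by_cases h : r < ρf x
    · rcases le_or_gt (ρf x) (2*r) with h2 | h2
      · rw [hcoef x hxA h h2]
        have hρpos : 0 < ρf x := lt_trans hr h
        rw [add_sub_cancel_left, norm_smul, Real.norm_eq_abs,
          abs_of_nonneg (div_nonneg (by linarith) hρpos.le)]
        rw [div_mul_eq_mul_div, div_le_iff₀ hρpos]
        nlinarith
      · rw [hwa x hxA h2.le]; simp [hr.le]
    · rw [hwu x (fun hh => h hh.2)]
      exact not_lt.1 h
  -- pointwise W comparison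
  have hWpt : ∀ x, W (w x) ≤ W (u x) := by
    intro x
    by_cases h : x ∈ A ∧ r < ρf x
    · obtain ⟨hxA, h1⟩ := h
      have hρpos : 0 < ρf x := lt_trans hr h1
      set nv := (ρf x)⁻¹ • (u x - a) with hnv
      have hnn : ‖nv‖ = 1 := by
        rw [hnv, norm_smul, norm_inv, Real.norm_eq_abs, abs_of_pos hρpos]
        exact inv_mul_cancel₀ hρpos.ne'
      have hun : u x = a + (ρf x) • nv := by
        rw [hnv, smul_smul, mul_inv_cancel₀ hρpos.ne', one_smul]
        abel
      have hmono := hH.2.2 nv hnn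
      rcases lt_or_ge (ρf x) (2*r) with h2 | h2
      · have hwx : w x = a + (2*r - ρf x) • nv := by
          rw [hcoef x hxA h1 h2.le, hnv, smul_smul, div_eq_mul_inv]
        rw [hwx]
        conv_rhs => rw [hun]
        exact le_of_lt (hmono ⟨by linarith, by linarith⟩ ⟨by linarith, by linarith⟩ (by linarith))
      · rw [hwa x hxA h2]
        exact hH.2.1 _
    · rw [hwu x h]
  -- strict pointwise W comparison in the middle region
  have hWptlt : ∀ x, x ∈ A → r < ρf x → ρf x < 2*r → W (w x) < W (u x) := by
    intro x hxA h1 h2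
    have hρpos : 0 < ρf x := lt_trans hr h1
    set nv := (ρf x)⁻¹ • (u x - a) with hnv
    have hnn : ‖nv‖ = 1 := by
      rw [hnv, norm_smul, norm_inv, Real.norm_eq_abs, abs_of_pos hρpos]
      exact inv_mul_cancel₀ hρpos.ne'
    have hun : u x = a + (ρf x) • nv := by
      rw [hnv, smul_smul, mul_inv_cancel₀ hρpos.ne', one_smul]
      abel
    have hmono := hH.2.2 nv hnn
    have hwx : w x = a + (2*r - ρf x) • nv := by
      rw [hcoef x hxA h1 h2.le, hnv, smul_smul, div_eq_mul_inv]
    rw [hwx]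
    conv_rhs => rw [hun]
    exact hmono ⟨by linarith, by linarith⟩ ⟨by linarith, by linarith⟩ (by linarith)
  -- global comparison bound
  have hwub : ∀ x, ‖w x - u x‖ ≤ 2 * max (ρf x - r) 0 := by
    intro x
    by_cases h : x ∈ A ∧ r < ρf x
    · obtain ⟨hxA, h1⟩ := h
      have hρpos : 0 < ρf x := lt_trans hr h1
      rcases le_or_gt (ρf x) (2*r) with h2 | h2
      · rw [hcoef x hxA h1 h2]
        have : a + ((2*r - ρf x) / ρf x) • (u x - a) - u x
            = (((2*r - ρf x) / ρf x) - 1) • (u x - a) := by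
          rw [sub_smul, one_smul]; abel
        rw [this, norm_smul, Real.norm_eq_abs]
        have he : ((2*r - ρf x) / ρf x - 1) = (2*r - 2*(ρf x)) / ρf x := by
          field_simp; ring
        rw [he, abs_div, abs_of_pos hρpos]
        rw [div_mul_eq_mul_div, div_le_iff₀ hρpos]
        have h3 : |2*r - 2*ρf x| = 2*(ρf x - r) := by
          rw [abs_of_nonpos (by linarith)]; ring
        rw [h3]
        have h4 : 2 * (ρf x - r) ≤ 2 * max (ρf x - r) 0 := by
          have := le_max_left (ρf x - r) 0; linarith
        nlinarith [le_max_left (ρf x - r) 0]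
      · rw [hwa x hxA h2.le]
        have : a - u x = -(u x - a) := by abel
        rw [this, norm_neg]
        have h4 : ρf x - r ≤ max (ρf x - r) 0 := le_max_left _ _
        have : ρf x ≤ 2 * (ρf x - r) := by linarith
        linarith
    · rw [hwu x h]
      simp only [sub_self, norm_zero]
      positivity
  -- exceptional sets
  set Z₁ : Set (EuclideanSpace ℝ (Fin n)) := {x | x ∈ Ω ∧ ρf x = r} with hZ₁def
  set Z₂ : Set (EuclideanSpace ℝ (Fin n)) := {x | x ∈ A ∧ ρf x = 2*r} with hZ₂def
  have hZ1meas : MeasurableSet Z₁ := by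
    have heq : Z₁ = Ω \ ((Ω ∩ ρf ⁻¹' Set.Iio r) ∪ (Ω ∩ ρf ⁻¹' Set.Ioi r)) := by
      ext y
      simp only [hZ₁def, Set.mem_setOf_eq, Set.mem_diff, Set.mem_union, Set.mem_inter_iff,
        Set.mem_preimage, Set.mem_Iio, Set.mem_Ioi]
      constructor
      · rintro ⟨hyΩ, he⟩
        exact ⟨hyΩ, by rintro (⟨_, hlt⟩ | ⟨_, hgt⟩) <;> linarith⟩
      · rintro ⟨hyΩ, hne⟩
        push_neg at hne
        exact ⟨hyΩ, le_antisymm (hne.2 hyΩ) (hne.1 hyΩ)⟩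
    rw [heq]
    exact hΩmeas.diff ((hOlt r).union (hOgt r)).measurableSet
  have hZ2meas : MeasurableSet Z₂ := by
    have heq : Z₂ = A \ ((Ω ∩ ρf ⁻¹' Set.Iio (2*r)) ∪ (Ω ∩ ρf ⁻¹' Set.Ioi (2*r))) := by
      ext y
      simp only [hZ₂def, Set.mem_setOf_eq, Set.mem_diff, Set.mem_union, Set.mem_inter_iff,
        Set.mem_preimage, Set.mem_Iio, Set.mem_Ioi]
      constructor
      · rintro ⟨hyA, he⟩
        exact ⟨hyA, by rintro (⟨_, hlt⟩ | ⟨_, hgt⟩) <;> linarith⟩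
      · rintro ⟨hyA, hne⟩
        push_neg at hne
        exact ⟨hyA, le_antisymm (hne.2 (hAsub hyA)) (hne.1 (hAsub hyA))⟩
    rw [heq]
    exact hAopen.measurableSet.diff ((hOlt (2*r)).union (hOgt (2*r))).measurableSet
  -- helper : if w = u near x then the conclusion holds at x
  have heqP : ∀ x ∈ Ω, (w =ᶠ[𝓝 x] u) →
      DifferentiableAt ℝ w x ∧ hsNorm (fderiv ℝ w x) ≤ hsNorm (fderiv ℝ u x) := by
    intro x hxΩ heq
    refine ⟨heq.differentiableAt_iff.2 (hudiff x hxΩ), le_of_eq (by rw [heq.fderiv_eq])⟩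
  -- everywhere-good points
  have hgood : ∀ x ∈ Ω, x ∉ Z₁ → x ∉ Z₂ →
      DifferentiableAt ℝ w x ∧ hsNorm (fderiv ℝ w x) ≤ hsNorm (fderiv ℝ u x) := by
    intro x hxΩ hx1 hx2
    rcases lt_trichotomy (ρf x) r with h1 | h1 | h1
    · -- ρ < r : w = u near x
      apply heqP x hxΩ
      apply Filter.eventually_of_mem ((hOlt r).mem_nhds ⟨hxΩ, h1⟩)
      intro y hy
      exact hwu y (fun hh => absurd hh.2 (not_lt.2 (le_of_lt hy.2)))
    · exact absurd ⟨hxΩ, h1⟩ hx1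
    · by_cases hxA : x ∈ A
      · rcases lt_trichotomy (ρf x) (2*r) with h2 | h2 | h2
        · -- middle region
          have hxV : x ∈ ((Ω ∩ ρf ⁻¹' Set.Ioi r) ∩ (Ω ∩ ρf ⁻¹' Set.Iio (2*r))) ∩ A :=
            ⟨⟨⟨hxΩ, h1⟩, ⟨hxΩ, h2⟩⟩, hxA⟩
          have hVopen : IsOpen (((Ω ∩ ρf ⁻¹' Set.Ioi r) ∩ (Ω ∩ ρf ⁻¹' Set.Iio (2*r))) ∩ A) :=
            ((hOgt r).inter (hOlt (2*r))).inter hAopen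
          have heq : w =ᶠ[𝓝 x] (fun y => a + (2 * r * (‖u y - a‖)⁻¹ - 1) • (u y - a)) := by
            apply Filter.eventually_of_mem (hVopen.mem_nhds hxV)
            intro y hy
            have hy1 : r < ρf y := hy.1.1.2
            have hy2 : ρf y < 2*r := hy.1.2.2
            have hρpos : (0:ℝ) < ρf y := lt_trans hr hy1
            rw [hcoef y hy.2 hy1 (le_of_lt hy2)]
            congr 1
            congr 1
            rw [hρf]
            field_simp
            rw [sub_div, div_self (hρpos.ne' : ‖u y - a‖ ≠ 0)]
          obtain ⟨L, hF, hLv⟩ := mid_hasFDeriv (hudiff x hxΩ).hasFDerivAt hr h1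
          have hdiff : DifferentiableAt ℝ w x := heq.differentiableAt_iff.2 hF.differentiableAt
          have hfd : fderiv ℝ w x = L := by rw [heq.fderiv_eq, hF.fderiv]
          refine ⟨hdiff, ?_⟩
          rw [hfd]
          apply hsNorm_le_hsNorm
          intro v
          rw [hLv v]
          exact key_ineq (u x - a) _ r (‖u x - a‖) rfl h1 h2 hr
        · exact absurd ⟨hxA, h2⟩ hx2
        · -- outer region : w = a near x
          have hxV : x ∈ (Ω ∩ ρf ⁻¹' Set.Ioi (2*r)) ∩ A := ⟨⟨hxΩ, h2⟩, hxA⟩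
          have hVopen : IsOpen ((Ω ∩ ρf ⁻¹' Set.Ioi (2*r)) ∩ A) := (hOgt (2*r)).inter hAopen
          have heq : w =ᶠ[𝓝 x] (fun _ => a) := by
            apply Filter.eventually_of_mem (hVopen.mem_nhds hxV)
            intro y hy
            exact hwa y hy.2 (le_of_lt hy.1.2)
          refine ⟨heq.differentiableAt_iff.2 (differentiableAt_const a), ?_⟩
          rw [heq.fderiv_eq, fderiv_const_apply]
          simpa [hsNorm_zero] using hsNorm_nonneg (fderiv ℝ u x)
      · -- x outside closure of A
        have hxcl : x ∉ closure A := by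
          intro hcl
          have hfr : x ∈ frontier A := by
            rw [frontier, hAopen.interior_eq]
            exact ⟨hcl, hxA⟩
          exact absurd (hbdry x ⟨hfr, hxΩ⟩) (not_le.2 h1)
        apply heqP x hxΩ
        apply Filter.eventually_of_mem ((isOpen_compl_iff.2 isClosed_closure).mem_nhds hxcl)
        intro y hy
        exact hwu y (fun hh => hy (subset_closure hh.1))
  -- a.e. points of Z₁
  have haeZ1 : ∀ᵐ x ∂(volume.restrict Z₁),
      DifferentiableAt ℝ w x ∧ hsNorm (fderiv ℝ w x) ≤ hsNorm (fderiv ℝ u x) := by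
    filter_upwards [Besicovitch.ae_tendsto_measure_inter_div volume Z₁,
      ae_restrict_mem hZ1meas] with x hdx hxZ
    obtain ⟨hxΩ, hxρ⟩ := hxZ
    have hne : u x - a ≠ 0 := fun h0 => hr.ne' (by rw [← hxρ, hρf]; simp [h0])
    have hρd : DifferentiableAt ℝ ρf x := ((hudiff x hxΩ).sub_const a).norm ℝ hne
    have hD0 : fderiv ℝ ρf x = 0 :=
      density_fderiv_eq_zero hdx hρd hxρ (fun y hy => hy.2)
    have hlo : (fun y => ρf y - r) =o[𝓝 x] (fun y => y - x) := by
      have h' : HasFDerivAt ρf (0 : EuclideanSpace ℝ (Fin n) →L[ℝ] ℝ) x := hD0 ▸ hρd.hasFDerivAt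
      have := h'.isLittleO
      simpa [hxρ] using this
    have hbig : (fun y => w y - u y) =O[𝓝 x] (fun y => ρf y - r) := by
      apply Asymptotics.IsBigO.of_bound 2
      filter_upwards [] with y
      have h1 := hwub y
      have h2 : max (ρf y - r) 0 ≤ |ρf y - r| :=
        max_le (le_abs_self _) (abs_nonneg _)
      rw [Real.norm_eq_abs]
      linarith
    have hwlo : (fun y => w y - u y) =o[𝓝 x] (fun y => y - x) := hbig.trans_isLittleO hlo
    have hwux : w x = u x := hwu x (fun hh => by rw [hxρ] at hh; exact lt_irrefl r hh.2)
    have hW : HasFDerivAt w (fderiv ℝ u x) x := by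
      have h2 := (hudiff x hxΩ).hasFDerivAt.isLittleO
      have h3 := hwlo.add h2
      have h4 : (fun y => (w y - u y) + (u y - u x - (fderiv ℝ u x) (y - x)))
          = (fun y => w y - w x - (fderiv ℝ u x) (y - x)) := by
        funext y; rw [hwux]; abel
      rw [h4] at h3
      exact HasFDerivAt.of_isLittleO h3
    exact ⟨hW.differentiableAt, le_of_eq (by rw [hW.fderiv])⟩
  -- a.e. points of Z₂
  have haeZ2 : ∀ᵐ x ∂(volume.restrict Z₂),
      DifferentiableAt ℝ w x ∧ hsNorm (fderiv ℝ w x) ≤ hsNorm (fderiv ℝ u x) := by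
    filter_upwards [Besicovitch.ae_tendsto_measure_inter_div volume Z₂,
      ae_restrict_mem hZ2meas] with x hdx hxZ
    obtain ⟨hxA, hxρ⟩ := hxZ
    have hxΩ : x ∈ Ω := hAsub hxA
    have hne : u x - a ≠ 0 := fun h0 =>
      (by positivity : (0:ℝ) < 2*r).ne' (by rw [← hxρ, hρf]; simp [h0])
    have hρd : DifferentiableAt ℝ ρf x := ((hudiff x hxΩ).sub_const a).norm ℝ hne
    have hD0 : fderiv ℝ ρf x = 0 :=
      density_fderiv_eq_zero hdx hρd hxρ (fun y hy => hy.2)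
    have hlo : (fun y => ρf y - 2*r) =o[𝓝 x] (fun y => y - x) := by
      have h' : HasFDerivAt ρf (0 : EuclideanSpace ℝ (Fin n) →L[ℝ] ℝ) x := hD0 ▸ hρd.hasFDerivAt
      have := h'.isLittleO
      simpa [hxρ] using this
    have hwax : w x = a := hwa x hxA (le_of_eq hxρ.symm)
    -- near x, ‖w y - a‖ ≤ |ρf y - 2r|
    have hbig : (fun y => w y - a) =O[𝓝 x] (fun y => ρf y - 2*r) := by
      have hxV : x ∈ (Ω ∩ ρf ⁻¹' Set.Ioi r) ∩ A := ⟨⟨hxΩ, by rw [Set.mem_preimage, Set.mem_Ioi, hxρ]; linarith⟩, hxA⟩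
      have hVopen : IsOpen ((Ω ∩ ρf ⁻¹' Set.Ioi r) ∩ A) := (hOgt r).inter hAopen
      apply Asymptotics.IsBigO.of_bound 1
      filter_upwards [hVopen.mem_nhds hxV] with y hy
      have hy1 : r < ρf y := hy.1.2
      have hρpos : (0:ℝ) < ρf y := lt_trans hr hy1
      rw [one_mul, Real.norm_eq_abs]
      rcases le_or_gt (ρf y) (2*r) with h2 | h2
      · rw [hcoef y hy.2 hy1 h2, add_sub_cancel_left, norm_smul, Real.norm_eq_abs,
          abs_div, abs_of_pos hρpos, abs_of_nonneg (by linarith : (0:ℝ) ≤ 2*r - ρf y)]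
        rw [div_mul_eq_mul_div, div_le_iff₀ hρpos]
        have : |ρf y - 2*r| = 2*r - ρf y := by rw [abs_of_nonpos (by linarith)]; ring
        rw [this]
      · rw [hwa y hy.2 (le_of_lt h2), sub_self, norm_zero]
        exact abs_nonneg _
    have hwlo : (fun y => w y - a) =o[𝓝 x] (fun y => y - x) := hbig.trans_isLittleO hlo
    have hW : HasFDerivAt w (0 : EuclideanSpace ℝ (Fin n) →L[ℝ] EuclideanSpace ℝ (Fin m)) x := by
      apply HasFDerivAt.of_isLittleO
      have h4 : (fun y => w y - a) = (fun y => w y - w x - (0 : EuclideanSpace ℝ (Fin n) →L[ℝ] EuclideanSpace ℝ (Fin m)) (y - x)) := by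
        funext y; rw [hwax]; simp
      rw [h4] at hwlo
      exact hwlo
    refine ⟨hW.differentiableAt, ?_⟩
    rw [hW.fderiv]
    simpa [hsNorm_zero] using hsNorm_nonneg (fderiv ℝ u x)
  -- combine into a.e. statement on Ω
  have hae : ∀ᵐ x ∂(volume.restrict Ω),
      DifferentiableAt ℝ w x ∧ hsNorm (fderiv ℝ w x) ≤ hsNorm (fderiv ℝ u x) := by
    rw [ae_restrict_iff' hΩmeas]
    have h1 := (ae_restrict_iff' hZ1meas).1 haeZ1
    have h2 := (ae_restrict_iff' hZ2meas).1 haeZ2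
    filter_upwards [h1, h2] with x hx1 hx2 hxΩ
    by_cases hz1 : x ∈ Z₁
    · exact hx1 hz1
    · by_cases hz2 : x ∈ Z₂
      · exact hx2 hz2
      · exact hgood x hxΩ hz1 hz2
  -- measurability of various functions
  have hmeasu : AEStronglyMeasurable u (volume.restrict Ω) :=
    hucont.aestronglyMeasurable hΩmeas
  have hmeas_hsu : Measurable (fun x => hsNorm (fderiv ℝ u x) ^ 2) :=
    ((continuous_hsNorm.measurable.comp (measurable_fderiv ℝ u)).pow_const 2)
  have hmeas_hsw : Measurable (fun x => hsNorm (fderiv ℝ w x) ^ 2) :=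
    ((continuous_hsNorm.measurable.comp (measurable_fderiv ℝ w)).pow_const 2)
  -- integrability of |Du|², W(u)
  have hInt_u2 : IntegrableOn (fun x => hsNorm (fderiv ℝ u x) ^ 2) Ω volume := by
    apply Integrable.mono' (hfin.const_mul 2) hmeas_hsu.aestronglyMeasurable
    filter_upwards [] with x
    rw [Real.norm_eq_abs, abs_of_nonneg (by positivity)]
    have h1 := hWnonneg (u x)
    have h2 := sq_nonneg (hsNorm (fderiv ℝ u x))
    ring_nf
    nlinarith
  have hInt_Wu : IntegrableOn (fun x => W (u x)) Ω volume := by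
    apply Integrable.mono' hfin (hWC1.continuous.comp_aestronglyMeasurable hmeasu)
    filter_upwards [] with x
    rw [Real.norm_eq_abs, abs_of_nonneg (hWnonneg _)]
    have h2 := sq_nonneg (hsNorm (fderiv ℝ u x))
    nlinarith
  -- measurability of w on Ω
  have hmeasw : AEStronglyMeasurable w (volume.restrict Ω) := by
    set S : Set (EuclideanSpace ℝ (Fin n)) := (Ω ∩ ρf ⁻¹' Set.Ioi r) ∩ A with hSdef
    have hSopen : IsOpen S := (hOgt r).inter hAopen
    have hSsub : S ⊆ Ω := fun y hy => hy.1.1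
    have hG : ContinuousOn (fun y =>
        a + ((min (ρf y) (max (2*r - ρf y) 0)) * (ρf y)⁻¹) • (u y - a)) S := by
      apply ContinuousOn.add continuousOn_const
      apply ContinuousOn.fun_smul
      · apply ContinuousOn.mul
        · exact continuous_min.comp_continuousOn (ContinuousOn.prodMk (hρcont.mono hSsub)
            (continuous_max.comp_continuousOn (ContinuousOn.prodMk
              (continuousOn_const.sub (hρcont.mono hSsub)) continuousOn_const)))
        · exact ContinuousOn.inv₀ (hρcont.mono hSsub)
            (fun y hy => (lt_trans hr hy.1.2).ne')
      · exact (hucont.mono hSsub).sub continuousOn_const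
    have hwS : ∀ y ∈ S, w y =
        a + ((min (ρf y) (max (2*r - ρf y) 0)) * (ρf y)⁻¹) • (u y - a) := by
      intro y hy
      have hy1 : r < ρf y := hy.1.2
      have hρpos : (0:ℝ) < ρf y := lt_trans hr hy1
      rcases le_or_gt (ρf y) (2*r) with h2 | h2
      · rw [hcoef y hy.2 hy1 h2]
        congr 2
        rw [max_eq_left (by linarith), min_eq_right (by linarith), div_eq_mul_inv]
      · rw [hwa y hy.2 (le_of_lt h2)]
        rw [max_eq_right (by linarith), min_eq_right hρpos.le]
        simp
    have hS1 : AEStronglyMeasurable w (volume.restrict S) := by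
      apply AEStronglyMeasurable.congr
        ((hG.aestronglyMeasurable hSopen.measurableSet))
      filter_upwards [ae_restrict_mem hSopen.measurableSet] with y hy
      exact (hwS y hy).symm
    have hS2 : AEStronglyMeasurable w (volume.restrict (Ω \ S)) := by
      apply AEStronglyMeasurable.congr
        ((hucont.mono Set.diff_subset).aestronglyMeasurable (hΩmeas.diff hSopen.measurableSet))
      filter_upwards [ae_restrict_mem (hΩmeas.diff hSopen.measurableSet)] with y hy
      refine (hwu y ?_).symm
      rintro ⟨hyA, hyρ⟩
      exact hy.2 ⟨⟨hy.1, hyρ⟩, hyA⟩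
    have hunion : S ∪ (Ω \ S) = Ω := Set.union_diff_cancel hSsub
    rw [← hunion]
    exact aestronglyMeasurable_union_iff.2 ⟨hS1, hS2⟩
  -- conjunct 3
  have hC3 : DiffAEOn Ω w := hae.mono fun x h => h.1
  -- conjunct 4
  have haesq : ∀ᵐ x ∂(volume.restrict Ω),
      hsNorm (fderiv ℝ w x) ^ 2 ≤ hsNorm (fderiv ℝ u x) ^ 2 := by
    filter_upwards [hae] with x hx
    exact pow_le_pow_left₀ (hsNorm_nonneg _) hx.2 2
  have hInt_w2 : IntegrableOn (fun x => hsNorm (fderiv ℝ w x) ^ 2) Ω volume := by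
    apply Integrable.mono' hInt_u2 hmeas_hsw.aestronglyMeasurable
    filter_upwards [haesq] with x hx
    rw [Real.norm_eq_abs, abs_of_nonneg (by positivity)]
    exact hx
  have hC4 : (∫ x in Ω, hsNorm (fderiv ℝ w x) ^ 2) ≤ ∫ x in Ω, hsNorm (fderiv ℝ u x) ^ 2 :=
    integral_mono_ae hInt_w2 hInt_u2 haesq
  -- conjunct 5
  have hInt_Ww : IntegrableOn (fun x => W (w x)) Ω volume := by
    apply Integrable.mono' hInt_Wu (hWC1.continuous.comp_aestronglyMeasurable hmeasw)
    filter_upwards [] with x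
    rw [Real.norm_eq_abs, abs_of_nonneg (hWnonneg _)]
    exact hWpt x
  have hC5 : (∫ x in Ω, W (w x)) ≤ ∫ x in Ω, W (u x) :=
    integral_mono_ae hInt_Ww hInt_Wu (Filter.Eventually.of_forall hWpt)
  refine ⟨hC1, hC2, hC3, hC4, hC5, ?_⟩
  -- conjunct 6 : strict energy inequality
  intro hcond
  -- energy decompositions
  have hEdec : ∀ (v : EuclideanSpace ℝ (Fin n) → EuclideanSpace ℝ (Fin m)),
      IntegrableOn (fun x => hsNorm (fderiv ℝ v x) ^ 2) Ω volume →
      IntegrableOn (fun x => W (v x)) Ω volume →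
      energy Ω W v = (1/2) * (∫ x in Ω, hsNorm (fderiv ℝ v x) ^ 2) + ∫ x in Ω, W (v x) := by
    intro v h1 h2
    rw [energy, integral_add (h1.const_mul (1/2)) h2, integral_const_mul]
  have hEw := hEdec w hInt_w2 hInt_Ww
  have hEu := hEdec u hInt_u2 hInt_Wu
  -- difference function
  set h : EuclideanSpace ℝ (Fin n) → ℝ := fun x => W (u x) - W (w x) with hhdef
  have hInt_h : IntegrableOn h Ω volume := hInt_Wu.sub hInt_Ww
  have hh0 : ∀ x, 0 ≤ h x := fun x => sub_nonneg.2 (hWpt x)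
  have hkey : 0 < ∫ x in Ω, h x := by
    rcases hcond with hM | hB
    · -- positive measure of the middle set
      set M : Set (EuclideanSpace ℝ (Fin n)) := {x ∈ A | r < ‖u x - a‖ ∧ ‖u x - a‖ < 2 * r} with hMdef
      have hMeq : M = ((Ω ∩ ρf ⁻¹' Set.Ioi r) ∩ (Ω ∩ ρf ⁻¹' Set.Iio (2*r))) ∩ A := by
        ext y
        simp only [hMdef, Set.mem_setOf_eq, Set.mem_inter_iff, Set.mem_preimage,
          Set.mem_Ioi, Set.mem_Iio]
        constructor
        · rintro ⟨hyA, h1, h2⟩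
          exact ⟨⟨⟨hAsub hyA, h1⟩, ⟨hAsub hyA, h2⟩⟩, hyA⟩
        · rintro ⟨⟨⟨_, h1⟩, ⟨_, h2⟩⟩, hyA⟩
          exact ⟨hyA, h1, h2⟩
      have hMmeas : MeasurableSet M := by
        rw [hMeq]
        exact (((hOgt r).inter (hOlt (2*r))).inter hAopen).measurableSet
      have hMsub : M ⊆ Ω := by
        rw [hMeq]; exact fun y hy => hy.1.1.1
      have hposM : 0 < ∫ x in M, h x := by
        rw [setIntegral_pos_iff_support_of_nonneg_ae
          (Filter.Eventually.of_forall hh0 : (0:EuclideanSpace ℝ (Fin n) → ℝ) ≤ᵐ[volume.restrict M] h)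
          (hInt_h.mono_set hMsub)]
        apply lt_of_lt_of_le hM
        apply measure_mono
        intro y hy
        rw [hMeq] at hy
        refine ⟨?_, by rw [← hMeq] at hy; exact hy⟩
        have := hWptlt y hy.2 hy.1.1.2 hy.1.2.2
        simp only [hhdef, Function.mem_support]
        intro h0
        rw [sub_eq_zero] at h0
        exact this.ne' h0
      calc (0:ℝ) < ∫ x in M, h x := hposM
        _ ≤ ∫ x in Ω, h x := by
            apply setIntegral_mono_set hInt_h
              (Filter.Eventually.of_forall hh0)
              (Filter.Eventually.of_forall hMsub)
    · -- positive outer potential energy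
      set Ap : Set (EuclideanSpace ℝ (Fin n)) := {x ∈ A | 2 * r < ‖u x - a‖} with hApdef
      have hApeq : Ap = (Ω ∩ ρf ⁻¹' Set.Ioi (2*r)) ∩ A := by
        ext y
        simp only [hApdef, Set.mem_setOf_eq, Set.mem_inter_iff, Set.mem_preimage, Set.mem_Ioi]
        constructor
        · rintro ⟨hyA, h1⟩; exact ⟨⟨hAsub hyA, h1⟩, hyA⟩
        · rintro ⟨⟨_, h1⟩, hyA⟩; exact ⟨hyA, h1⟩
      have hApmeas : MeasurableSet Ap := by
        rw [hApeq]; exact ((hOgt (2*r)).inter hAopen).measurableSet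
      have hApsub : Ap ⊆ Ω := by rw [hApeq]; exact fun y hy => hy.1.1
      have hcongr : ∫ x in Ap, h x = ∫ x in Ap, W (u x) := by
        apply setIntegral_congr_fun hApmeas
        intro y hy
        rw [hApeq] at hy
        simp only [hhdef]
        rw [hwa y hy.2 (le_of_lt hy.1.2), hH.1, sub_zero]
      calc (0:ℝ) < ∫ x in Ap, W (u x) := hB
        _ = ∫ x in Ap, h x := hcongr.symm
        _ ≤ ∫ x in Ω, h x := by
            apply setIntegral_mono_set hInt_h
              (Filter.Eventually.of_forall hh0)
              (Filter.Eventually.of_forall hApsub)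
  have hWW : (∫ x in Ω, W (w x)) < ∫ x in Ω, W (u x) := by
    have := integral_sub hInt_Wu hInt_Ww
    have heq : (∫ x in Ω, h x) = (∫ x in Ω, W (u x)) - ∫ x in Ω, W (w x) := by
      rw [hhdef]
      exact integral_sub hInt_Wu hInt_Ww
    linarith [hkey, heq ▸ hkey]
  rw [hEw, hEu]
  linarith

end Main
end

section
/- Let a ∈ ℝᵐ, r > 0, and let u be a map from an open subset of ℝⁿ to ℝᵐ differentiable at a point x with r < |u(x) − a| < 2r. Define ρ = |u − a|, n = (u − a)/|u − a|, and w = a + (2r − ρ)·n on a neighborhood of x. Then w is differentiable at x and ‖Dw(x)‖² = |∇ρ(x)|² + (2r − ρ(x))²·‖Dn(x)‖² ≤ |∇ρ(x)|² + ρ(x)²·‖Dn(x)‖² = ‖Du(x)‖², where ‖·‖ denotes the Hilbert–Schmidt (Frobenius) norm. -/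
open MeasureTheory Set InnerProductSpace

lemma hsNorm_sq {n m : ℕ} (L : EuclideanSpace ℝ (Fin n) →L[ℝ] EuclideanSpace ℝ (Fin m)) :
    hsNorm L ^ 2 = ∑ i : Fin n, ‖L (EuclideanSpace.single i 1)‖ ^ 2 :=
  Real.sq_sqrt (Finset.sum_nonneg fun _ _ => sq_nonneg _)

lemma key_expand {m : ℕ} (nv z : EuclideanSpace ℝ (Fin m)) (c : ℝ)
    (h1 : ‖nv‖ = 1) (ho : ⟪nv, z⟫_ℝ = 0) :
    ‖c • nv + z‖ ^ 2 = c ^ 2 + ‖z‖ ^ 2 := by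
  rw [norm_add_sq_real, real_inner_smul_left, ho, norm_smul, h1]
  simp [mul_pow]


set_option maxHeartbeats 1000000 in
theorem radial_reflection_gradient_bound
    {n m : ℕ} (a : EuclideanSpace ℝ (Fin m)) (r : ℝ) (hr : 0 < r)
    (u : EuclideanSpace ℝ (Fin n) → EuclideanSpace ℝ (Fin m))
    (x : EuclideanSpace ℝ (Fin n))
    (hu : DifferentiableAt ℝ u x)
    (hlow : r < ‖u x - a‖) (hhigh : ‖u x - a‖ < 2 * r)
    (ρ : EuclideanSpace ℝ (Fin n) → ℝ)
    (hρ : ρ = fun y => ‖u y - a‖)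
    (nvec : EuclideanSpace ℝ (Fin n) → EuclideanSpace ℝ (Fin m))
    (hnvec : nvec = fun y => ‖u y - a‖⁻¹ • (u y - a))
    (w : EuclideanSpace ℝ (Fin n) → EuclideanSpace ℝ (Fin m))
    (hw : w = fun y => a + (2 * r - ρ y) • nvec y) :
    DifferentiableAt ℝ w x ∧
    hsNorm (fderiv ℝ w x) ^ 2 =
      ‖gradient ρ x‖ ^ 2 + (2 * r - ρ x) ^ 2 * hsNorm (fderiv ℝ nvec x) ^ 2 ∧
    hsNorm (fderiv ℝ w x) ^ 2 ≤
      ‖gradient ρ x‖ ^ 2 + ρ x ^ 2 * hsNorm (fderiv ℝ nvec x) ^ 2 ∧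
    ‖gradient ρ x‖ ^ 2 + ρ x ^ 2 * hsNorm (fderiv ℝ nvec x) ^ 2 =
      hsNorm (fderiv ℝ u x) ^ 2 := by
  have hux : u x - a ≠ 0 := by
    intro h
    rw [h, norm_zero] at hlow; linarith
  have hρx : ‖u x - a‖ ≠ 0 := by simpa [norm_eq_zero] using hux
  have hsub : DifferentiableAt ℝ (fun y => u y - a) x := hu.sub_const a
  have hρd : DifferentiableAt ℝ ρ x := by
    rw [hρ]; exact hsub.norm ℝ hux
  have hnd : DifferentiableAt ℝ nvec x := by
    rw [hnvec]
    exact ((hsub.norm ℝ hux).inv hρx).smul hsub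
  set ρ' : EuclideanSpace ℝ (Fin n) →L[ℝ] ℝ := fderiv ℝ ρ x with hρ'
  set N' := fderiv ℝ nvec x with hN'
  have hρxv : ρ x = ‖u x - a‖ := by rw [hρ]
  have hnxv : nvec x = ‖u x - a‖⁻¹ • (u x - a) := by rw [hnvec]
  -- ‖nvec x‖ = 1
  have hnx1 : ‖nvec x‖ = 1 := by
    rw [hnxv]
    rw [norm_smul, norm_inv, norm_norm, inv_mul_cancel₀ hρx]
  -- eventually ⟪nvec y, nvec y⟫ = 1
  have hev : (fun y => ⟪nvec y, nvec y⟫_ℝ) =ᶠ[nhds x] (fun _ => (1 : ℝ)) := by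
    have hne : ∀ᶠ y in nhds x, u y - a ≠ 0 := hsub.continuousAt.eventually_ne hux
    filter_upwards [hne] with y hy
    have hy' : ‖u y - a‖ ≠ 0 := by simpa [norm_eq_zero] using hy
    rw [hnvec]
    simp only
    rw [real_inner_smul_left, real_inner_smul_right, real_inner_self_eq_norm_mul_norm]
    field_simp
  -- orthogonality
  have horth : ∀ e, ⟪nvec x, N' e⟫_ℝ = 0 := by
    intro e
    have h0 : fderiv ℝ (fun y => ⟪nvec y, nvec y⟫_ℝ) x = 0 := by
      rw [hev.fderiv_eq]
      exact fderiv_const_apply 1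
    have h1 := fderiv_inner_apply (𝕜 := ℝ) hnd hnd e
    rw [h0] at h1
    simp only [ContinuousLinearMap.zero_apply] at h1
    have hsymm : ⟪fderiv ℝ nvec x e, nvec x⟫_ℝ = ⟪nvec x, N' e⟫_ℝ := real_inner_comm _ _
    rw [hsymm, ← hN'] at h1
    linarith
  -- derivative of w
  have hcd : HasFDerivAt (fun y => 2 * r - ρ y) (-ρ') x := by
    exact hρd.hasFDerivAt.const_sub (2 * r)
  have hWd : HasFDerivAt w ((2 * r - ρ x) • N' + (-ρ').smulRight (nvec x)) x := by
    rw [hw]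
    exact (hcd.smul hnd.hasFDerivAt).const_add a
  -- u = a + ρ • nvec
  have hUeq : u = fun y => a + ρ y • nvec y := by
    funext y
    rw [hρ, hnvec]
    simp only [smul_smul]
    by_cases h : u y - a = 0
    · rw [h]; simp [show u y = a from by rwa [sub_eq_zero] at h]
    · rw [mul_inv_cancel₀ (by simpa [norm_eq_zero] using h), one_smul]
      abel
  have hUd : HasFDerivAt u (ρ x • N' + ρ'.smulRight (nvec x)) x := by
    rw [hUeq]
    exact (hρd.hasFDerivAt.smul hnd.hasFDerivAt).const_add a
  -- gradient coordinates
  have hgrads : ∀ i : Fin n, ρ' (EuclideanSpace.single i 1) = gradient ρ x i := by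
    intro i
    have : ρ' (EuclideanSpace.single i 1) = ⟪gradient ρ x, EuclideanSpace.single i 1⟫_ℝ := by
      rw [← toDual_apply_apply]
      unfold gradient
      rw [LinearIsometryEquiv.apply_symm_apply]
    rw [this, EuclideanSpace.inner_single_right]
    simp
  have hgnorm : ‖gradient ρ x‖ ^ 2 = ∑ i : Fin n, ρ' (EuclideanSpace.single i 1) ^ 2 := by
    rw [EuclideanSpace.norm_eq, Real.sq_sqrt (Finset.sum_nonneg fun _ _ => sq_nonneg _)]
    exact Finset.sum_congr rfl fun i _ => by
      rw [hgrads i]; simp [Real.norm_eq_abs, sq_abs]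
  -- termwise norms
  have hwterm : ∀ i : Fin n, ‖(fderiv ℝ w x) (EuclideanSpace.single i 1)‖ ^ 2 =
      ρ' (EuclideanSpace.single i 1) ^ 2 +
        (2 * r - ρ x) ^ 2 * ‖N' (EuclideanSpace.single i 1)‖ ^ 2 := by
    intro i
    set e := EuclideanSpace.single (𝕜 := ℝ) i (1 : ℝ) with he
    rw [hWd.fderiv]
    have happ : ((2 * r - ρ x) • N' + (-ρ').smulRight (nvec x)) e
        = (-(ρ' e)) • nvec x + (2 * r - ρ x) • N' e := by
      simp only [ContinuousLinearMap.add_apply, ContinuousLinearMap.smul_apply,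
        ContinuousLinearMap.smulRight_apply, ContinuousLinearMap.neg_apply, neg_smul]
      abel
    rw [happ, key_expand _ _ _ hnx1 (by rw [real_inner_smul_right, horth]; ring),
      norm_smul]
    simp only [Real.norm_eq_abs, mul_pow, sq_abs, neg_sq]
  have huterm : ∀ i : Fin n, ‖(fderiv ℝ u x) (EuclideanSpace.single i 1)‖ ^ 2 =
      ρ' (EuclideanSpace.single i 1) ^ 2 +
        ρ x ^ 2 * ‖N' (EuclideanSpace.single i 1)‖ ^ 2 := by
    intro i
    set e := EuclideanSpace.single (𝕜 := ℝ) i (1 : ℝ) with he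
    rw [hUd.fderiv]
    have happ : (ρ x • N' + ρ'.smulRight (nvec x)) e
        = (ρ' e) • nvec x + ρ x • N' e := by
      simp only [ContinuousLinearMap.add_apply, ContinuousLinearMap.smul_apply,
        ContinuousLinearMap.smulRight_apply]
      abel
    rw [happ, key_expand _ _ _ hnx1 (by rw [real_inner_smul_right, horth]; ring),
      norm_smul]
    simp only [Real.norm_eq_abs, mul_pow, sq_abs]
  have hweq : hsNorm (fderiv ℝ w x) ^ 2 =
      ‖gradient ρ x‖ ^ 2 + (2 * r - ρ x) ^ 2 * hsNorm N' ^ 2 := by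
    rw [hsNorm_sq, hsNorm_sq, hgnorm, Finset.mul_sum, ← Finset.sum_add_distrib]
    exact Finset.sum_congr rfl fun i _ => hwterm i
  have hueq : ‖gradient ρ x‖ ^ 2 + ρ x ^ 2 * hsNorm N' ^ 2 = hsNorm (fderiv ℝ u x) ^ 2 := by
    rw [hsNorm_sq, hsNorm_sq, hgnorm, Finset.mul_sum, ← Finset.sum_add_distrib]
    exact (Finset.sum_congr rfl fun i _ => (huterm i).symm)
  refine ⟨hWd.differentiableAt, hweq, ?_, hueq⟩
  rw [hweq]
  have hρlt : ρ x < 2 * r := by rw [hρxv]; exact hhigh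
  have hρgt : r < ρ x := by rw [hρxv]; exact hlow
  have hsq : (2 * r - ρ x) ^ 2 ≤ ρ x ^ 2 := by nlinarith
  have hmul := mul_le_mul_of_nonneg_right hsq (sq_nonneg (hsNorm N'))
  linarith
end

section
/- Let r > 0 and w₀ > 0. Let [c, d] ⊂ ℝ be a compact interval with c < d, let f : [c, d] → ℝ be continuously differentiable with |f(d) − f(c)| ≥ r/4, and let g : [c, d] → ℝ be integrable with g(t) ≥ w₀ for all t ∈ [c, d]. Then ∫_c^d ( (1/2) f′(t)² + g(t) ) dt ≥ r·√(w₀) / (2√2). -/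
open MeasureTheory Set

theorem crossing_lower_bound
    (r w₀ c d : ℝ) (hr : 0 < r) (hw₀ : 0 < w₀) (hcd : c < d)
    (f f' g : ℝ → ℝ)
    (hf : ∀ t ∈ Set.Icc c d, HasDerivAt f (f' t) t)
    (hf'cont : ContinuousOn f' (Set.Icc c d))
    (hgap : r / 4 ≤ |f d - f c|)
    (hgint : IntegrableOn g (Set.Icc c d) volume)
    (hg : ∀ t ∈ Set.Icc c d, w₀ ≤ g t) :
    r * Real.sqrt w₀ / (2 * Real.sqrt 2) ≤
      ∫ t in Set.Icc c d, ((1 / 2 : ℝ) * f' t ^ 2 + g t) := by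
  
  set s := Real.sqrt (2 * w₀) with hs
  have hs0 : 0 < s := Real.sqrt_pos.mpr (by linarith)
  have hssq : s ^ 2 = 2 * w₀ := Real.sq_sqrt (by linarith)
  have hle : c ≤ d := hcd.le
  have hf'int : IntegrableOn f' (Set.Icc c d) volume :=
    hf'cont.integrableOn_compact isCompact_Icc
  have hrhsint : IntegrableOn (fun t => (1 / 2 : ℝ) * f' t ^ 2 + g t) (Set.Icc c d) volume := by
    exact (((hf'cont.pow 2).const_smul (1/2 : ℝ)).integrableOn_compact isCompact_Icc).add hgint
  -- pointwise bound
  have hpt : ∀ t ∈ Set.Icc c d, s * |f' t| ≤ (1 / 2 : ℝ) * f' t ^ 2 + g t := by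
    intro t ht
    have h1 : 0 ≤ (|f' t| - s) ^ 2 := sq_nonneg _
    have h2 : |f' t| ^ 2 = f' t ^ 2 := sq_abs _
    have := hg t ht
    nlinarith [sq_nonneg (|f' t| - s)]
  -- FTC
  have hftc : ∫ t in c..d, f' t = f d - f c := by
    apply intervalIntegral.integral_eq_sub_of_hasDerivAt
    · intro t ht
      exact hf t (by rwa [Set.uIcc_of_le hle] at ht)
    · exact (intervalIntegrable_iff_integrableOn_Icc_of_le hle).mpr hf'int
  have hIccIoc : ∫ t in Set.Icc c d, f' t = ∫ t in c..d, f' t := by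
    rw [intervalIntegral.integral_of_le hle, MeasureTheory.integral_Icc_eq_integral_Ioc]
  have habs : |f d - f c| ≤ ∫ t in Set.Icc c d, |f' t| := by
    rw [← hftc, ← hIccIoc]
    simpa [Real.norm_eq_abs] using MeasureTheory.norm_integral_le_integral_norm (μ := volume.restrict (Set.Icc c d)) f'
  have habsint : IntegrableOn (fun t => |f' t|) (Set.Icc c d) volume := hf'int.abs
  have hmono : ∫ t in Set.Icc c d, s * |f' t| ≤
      ∫ t in Set.Icc c d, ((1 / 2 : ℝ) * f' t ^ 2 + g t) := by
    apply MeasureTheory.setIntegral_mono_on (habsint.const_mul s) hrhsint measurableSet_Icc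
    exact hpt
  have hsmul : ∫ t in Set.Icc c d, s * |f' t| = s * ∫ t in Set.Icc c d, |f' t| :=
    MeasureTheory.integral_const_mul s _
  have hchain : s * (r / 4) ≤ ∫ t in Set.Icc c d, ((1 / 2 : ℝ) * f' t ^ 2 + g t) := by
    calc s * (r / 4) ≤ s * |f d - f c| := by nlinarith
    _ ≤ s * ∫ t in Set.Icc c d, |f' t| := by nlinarith [habs]
    _ = ∫ t in Set.Icc c d, s * |f' t| := hsmul.symm
    _ ≤ _ := hmono
  -- constant arithmetic: s * (r/4) = r * √w₀ / (2√2)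
  have hs2 : Real.sqrt (2 * w₀) = Real.sqrt 2 * Real.sqrt w₀ := Real.sqrt_mul (by norm_num) _
  have h2pos : (0:ℝ) < Real.sqrt 2 := Real.sqrt_pos.mpr (by norm_num)
  have hsq2 : Real.sqrt 2 * Real.sqrt 2 = 2 := Real.mul_self_sqrt (by norm_num)
  have : r * Real.sqrt w₀ / (2 * Real.sqrt 2) = s * (r / 4) := by
    rw [hs, hs2, div_eq_iff (by positivity)]
    linear_combination (-(Real.sqrt w₀ * r / 2)) * hsq2
  linarith [hchain]
end

section
/- Let a ∈ ℝᵐ, r > 0, w₀ > 0, R > 0, and let W : ℝᵐ → ℝ be a nonnegative continuous potential such that W(v) ≥ w₀ whenever |v − a| ≥ r/4. Let γ : [−R, R] → ℝᵐ be continuously differentiable and suppose there exists t* ∈ [−R, R] with |γ(t*) − a| ≥ r/2. Then ∫_{−R}^{R} ( (1/2)|γ′(t)|² + W(γ(t)) ) dt ≥ min( r·√(w₀)/(2√2), 2R·w₀ ). -/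
open MeasureTheory Set

lemma cross_exists {f : ℝ → ℝ} {A B c : ℝ}
    (hf : ContinuousOn f (Set.Icc A B)) (hAB : A ≤ B) (hA : f A ≤ c) (hB : ¬ f B ≤ c) :
    ∃ s ∈ Set.Icc A B, f s ≤ c ∧ ∀ t ∈ Set.Ioc s B, c ≤ f t := by
  set S : Set ℝ := Set.Icc A B ∩ f ⁻¹' Set.Iic c with hS
  have hne : S.Nonempty := ⟨A, ⟨le_refl A, hAB⟩, hA⟩
  have hbdd : BddAbove S := (bddAbove_Icc : BddAbove (Set.Icc A B)).mono inter_subset_left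
  have hclosed : IsClosed S := hf.preimage_isClosed_of_isClosed isClosed_Icc isClosed_Iic
  have hmem : sSup S ∈ S := hclosed.csSup_mem hne hbdd
  refine ⟨sSup S, hmem.1, hmem.2, ?_⟩
  intro t ht
  by_contra h
  push_neg at h
  have : t ∈ S := ⟨⟨hmem.1.1.trans ht.1.le, ht.2⟩, h.le⟩
  exact absurd (le_csSup hbdd this) (not_le.2 ht.1)

theorem column_dichotomy_lower_bound
    {m : ℕ} (a : EuclideanSpace ℝ (Fin m)) (r w₀ R : ℝ)
    (hr : 0 < r) (hw₀ : 0 < w₀) (hR : 0 < R)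
    (W : EuclideanSpace ℝ (Fin m) → ℝ)
    (hWcont : Continuous W) (hWnonneg : ∀ v, 0 ≤ W v)
    (hWlb : ∀ v, r / 4 ≤ ‖v - a‖ → w₀ ≤ W v)
    (γ γ' : ℝ → EuclideanSpace ℝ (Fin m))
    (hγ : ∀ t ∈ Set.Icc (-R) R, HasDerivAt γ (γ' t) t)
    (hγ'cont : ContinuousOn γ' (Set.Icc (-R) R))
    (hstar : ∃ tstar ∈ Set.Icc (-R) R, r / 2 ≤ ‖γ tstar - a‖) :
    min (r * Real.sqrt w₀ / (2 * Real.sqrt 2)) (2 * R * w₀) ≤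
      ∫ t in Set.Icc (-R) R, ((1 / 2 : ℝ) * ‖γ' t‖ ^ 2 + W (γ t)) := by
  set E : ℝ → ℝ := fun t => (1 / 2 : ℝ) * ‖γ' t‖ ^ 2 + W (γ t) with hEdef
  have hγcont : ContinuousOn γ (Set.Icc (-R) R) := fun t ht =>
    ((hγ t ht).continuousAt).continuousWithinAt
  have hEcont : ContinuousOn E (Set.Icc (-R) R) := by
    exact (continuousOn_const.mul ((hγ'cont.norm).pow 2)).add
      (hWcont.comp_continuousOn hγcont)
  have hEint : IntegrableOn E (Set.Icc (-R) R) := hEcont.integrableOn_Icc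
  have hEnn : ∀ t, 0 ≤ E t := fun t => add_nonneg (by positivity) (hWnonneg _)
  obtain ⟨u, hu, hfu⟩ := hstar
  by_cases hcase : ∀ t ∈ Set.Icc (-R) R, r / 4 ≤ ‖γ t - a‖
  · -- potential term alone
    have hmono : ∫ t in Set.Icc (-R) R, (w₀ : ℝ) ≤ ∫ t in Set.Icc (-R) R, E t := by
      refine setIntegral_mono_on (integrableOn_const ?_) hEint measurableSet_Icc ?_
      · rw [Real.volume_Icc]; exact ENNReal.ofReal_ne_top
      · intro t ht
        have := hWlb _ (hcase t ht)
        have h0 : (0:ℝ) ≤ (1/2 : ℝ) * ‖γ' t‖ ^ 2 := by positivity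
        simp only [hEdef]; linarith
    have hconst : ∫ t in Set.Icc (-R) R, (w₀ : ℝ) = 2 * R * w₀ := by
      rw [setIntegral_const, measureReal_def, Real.volume_Icc, smul_eq_mul,
        ENNReal.toReal_ofReal (by linarith)]
      ring
    rw [hconst] at hmono
    exact le_trans (min_le_right _ _) hmono
  · push_neg at hcase
    obtain ⟨t₀, ht₀, hft₀⟩ := hcase
    -- produce a crossing interval
    have key : ∃ s v, (-R ≤ s) ∧ s ≤ v ∧ v ≤ R ∧
        r / 4 ≤ |‖γ v - a‖ - ‖γ s - a‖| ∧
        ∀ t ∈ Set.Ioo s v, r / 4 ≤ ‖γ t - a‖ := by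
      have hlt : ¬ ‖γ u - a‖ ≤ r / 4 := by push_neg; linarith
      rcases le_total t₀ u with hord | hord
      · have hfc : ContinuousOn (fun t => ‖γ t - a‖) (Set.Icc t₀ u) :=
          ((hγcont.mono (Icc_subset_Icc ht₀.1 hu.2)).sub continuousOn_const).norm
        obtain ⟨s, hs, hfs, hmids⟩ := cross_exists hfc hord hft₀.le hlt
        refine ⟨s, u, ht₀.1.trans hs.1, hs.2, hu.2, ?_, ?_⟩
        · have : r / 4 ≤ ‖γ u - a‖ - ‖γ s - a‖ := by linarith
          exact this.trans (le_abs_self _)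
        · intro t ht
          exact hmids t ⟨ht.1, ht.2.le⟩
      · -- u ≤ t₀ : cross backwards via reflection
        have hfc : ContinuousOn (fun t => ‖γ (-t) - a‖) (Set.Icc (-t₀) (-u)) := by
          refine (((hγcont.comp continuousOn_neg ?_).sub continuousOn_const).norm)
          intro t ht
          simp only [Set.mem_Icc] at ht
          exact ⟨by linarith [hu.1], by linarith [ht₀.2]⟩
        have hA' : (fun t => ‖γ (-t) - a‖) (-t₀) ≤ r / 4 := by
          show ‖γ (- -t₀) - a‖ ≤ r / 4
          rw [neg_neg]; exact hft₀.le
        have hB' : ¬ (fun t => ‖γ (-t) - a‖) (-u) ≤ r / 4 := by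
          show ¬ ‖γ (- -u) - a‖ ≤ r / 4
          rw [neg_neg]; exact hlt
        obtain ⟨s', hs', hfs', hmids⟩ :=
          cross_exists hfc (neg_le_neg hord) hA' hB'
        refine ⟨u, -s', hu.1, by linarith [hs'.2], by linarith [hs'.1, ht₀.2], ?_, ?_⟩
        · have hfs'' : ‖γ (-s') - a‖ ≤ r / 4 := hfs'
          have : r / 4 ≤ ‖γ u - a‖ - ‖γ (-s') - a‖ := by linarith
          have habs : r / 4 ≤ |‖γ u - a‖ - ‖γ (-s') - a‖| := this.trans (le_abs_self _)
          rwa [abs_sub_comm]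
        · intro t ht
          have := hmids (-t) ⟨by linarith [ht.2], by linarith [ht.1]⟩
          simpa using this
    obtain ⟨s, v, hsR, hsv, hvR, hgap, hmid⟩ := key
    have hsub : Set.Icc s v ⊆ Set.Icc (-R) R := Icc_subset_Icc hsR hvR
    have huIcc : Set.uIcc s v = Set.Icc s v := uIcc_of_le hsv
    have hγ'int : IntervalIntegrable γ' volume s v :=
      (hγ'cont.mono (huIcc ▸ hsub)).intervalIntegrable
    have hFTC : ∫ t in s..v, γ' t = γ v - γ s :=
      intervalIntegral.integral_eq_sub_of_hasDerivAt
        (fun t ht => hγ t (hsub (huIcc ▸ ht))) hγ'int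
    set c : ℝ := Real.sqrt (2 * w₀) with hcdef
    have hc0 : 0 < c := Real.sqrt_pos.2 (by linarith)
    have hc2 : c ^ 2 = 2 * w₀ := Real.sq_sqrt (by linarith)
    have step1 : r / 4 * c ≤ ‖γ v - γ s‖ * c := by
      refine mul_le_mul_of_nonneg_right ?_ hc0.le
      have habs : |‖γ v - a‖ - ‖γ s - a‖| ≤ ‖(γ v - a) - (γ s - a)‖ :=
        abs_norm_sub_norm_le _ _
      rw [sub_sub_sub_cancel_right] at habs
      linarith
    have step2 : ‖γ v - γ s‖ ≤ ∫ t in s..v, ‖γ' t‖ := by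
      rw [← hFTC]
      exact intervalIntegral.norm_integral_le_integral_norm hsv
    have hnormcont : ContinuousOn (fun t => c * ‖γ' t‖) (Set.Icc s v) :=
      continuousOn_const.mul ((hγ'cont.mono hsub).norm)
    have step3 : (∫ t in s..v, c * ‖γ' t‖) = ∫ t in Set.Ioo s v, c * ‖γ' t‖ := by
      rw [intervalIntegral.integral_of_le hsv, integral_Ioc_eq_integral_Ioo]
    have step4 : (∫ t in Set.Ioo s v, c * ‖γ' t‖) ≤ ∫ t in Set.Ioo s v, E t := by
      refine setIntegral_mono_on
        (hnormcont.integrableOn_Icc.mono_set Ioo_subset_Icc_self)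
        (hEint.mono_set ((Ioo_subset_Icc_self).trans hsub)) measurableSet_Ioo ?_
      intro t ht
      have hW : w₀ ≤ W (γ t) := hWlb _ (hmid t ht)
      have : c * ‖γ' t‖ ≤ (1 / 2 : ℝ) * ‖γ' t‖ ^ 2 + w₀ := by
        nlinarith [sq_nonneg (‖γ' t‖ - c)]
      simp only [hEdef]; linarith
    have step5 : (∫ t in Set.Ioo s v, E t) ≤ ∫ t in Set.Icc (-R) R, E t := by
      refine setIntegral_mono_set hEint (Filter.Eventually.of_forall hEnn)
        (HasSubset.Subset.eventuallyLE ((Ioo_subset_Icc_self).trans hsub))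
    have hmin : min (r * Real.sqrt w₀ / (2 * Real.sqrt 2)) (2 * R * w₀) ≤ r / 4 * c := by
      refine le_trans (min_le_left _ _) (le_of_eq ?_)
      rw [hcdef, Real.sqrt_mul (by norm_num : (0:ℝ) ≤ 2)]
      have h2 : Real.sqrt 2 * Real.sqrt 2 = 2 := Real.mul_self_sqrt (by norm_num)
      have h2pos : (0:ℝ) < Real.sqrt 2 := Real.sqrt_pos.2 (by norm_num)
      rw [div_eq_iff (by positivity)]
      linear_combination (-(r * Real.sqrt w₀ / 2)) * h2
    calc min (r * Real.sqrt w₀ / (2 * Real.sqrt 2)) (2 * R * w₀)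
        ≤ r / 4 * c := hmin
      _ ≤ ‖γ v - γ s‖ * c := step1
      _ ≤ (∫ t in s..v, ‖γ' t‖) * c := mul_le_mul_of_nonneg_right step2 hc0.le
      _ = ∫ t in s..v, c * ‖γ' t‖ := by
          rw [mul_comm, ← intervalIntegral.integral_const_mul]
      _ = ∫ t in Set.Ioo s v, c * ‖γ' t‖ := step3
      _ ≤ ∫ t in Set.Ioo s v, E t := step4
      _ ≤ ∫ t in Set.Icc (-R) R, E t := step5
end

section
/- Let a ∈ ℝ², r > 0, C > 0, w₀ > 0, μ > 0, R > 0, and let W : ℝ² → ℝ be a nonnegative continuous potential such that W(v) ≥ w₀ whenever |v − a| ≥ r/4 and v lies in the closed right half-plane {v₁ ≥ 0}. Let Ω = (0, μR) × (−R, R) and let u : cl(Ω) → ℝ² be C¹ with u₁ ≥ 0 on Ω and with energy J_Ω(u) = ∫_Ω ( (1/2)‖Du‖² + W(u) ) dx ≤ CR. Define i_R = { x₁ ∈ (0, μR) : ∃ x₂ ∈ (−R, R) with |u(x₁, x₂) − a| ≥ r/2 }. Then there exists R₀ > 0, depending only on r and w₀ (one may take R₀ = r/(4√(2w₀))), such that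 for all R ≥ R₀ the one-dimensional Lebesgue measure of i_R satisfies |i_R| ≤ 2√2·C·R/(r·√(w₀)); consequently, if moreover μ > η₀ := 2√2·C/(r·√(w₀)), there exists x̄₁ ∈ (0, μR) with x̄₁ ≤ η₀R such that |u(x̄₁, x₂) − a| < r/2 for all x₂ ∈ (−R, R). -/
open MeasureTheory Set

/- ### Auxiliary lemmas -/

lemma measurable_indicator_open {α : Type*} [TopologicalSpace α] [MeasurableSpace α]
    [OpensMeasurableSpace α] {f : α → ℝ} {s : Set α} (hs : IsOpen s)
    (hf : ContinuousOn f s) : Measurable (s.indicator f) := by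
  apply measurable_of_isOpen
  intro U hU
  have h1 : IsOpen (s ∩ f ⁻¹' U) := hf.isOpen_inter_preimage hs hU
  by_cases h0 : (0:ℝ) ∈ U
  · have : s.indicator f ⁻¹' U = (s ∩ f ⁻¹' U) ∪ sᶜ := by
      ext x; by_cases hx : x ∈ s <;> simp [Set.indicator, hx, h0]
    rw [this]; exact h1.measurableSet.union hs.measurableSet.compl
  · have : s.indicator f ⁻¹' U = s ∩ f ⁻¹' U := by
      ext x; by_cases hx : x ∈ s <;> simp [Set.indicator, hx, h0]
    rw [this]; exact h1.measurableSet

lemma mk2_zero (s t : ℝ) : mk2 s t 0 = s := rfl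
lemma mk2_one (s t : ℝ) : mk2 s t 1 = t := rfl

lemma mk2_line (x₁ t : ℝ) :
    mk2 x₁ t = mk2 x₁ 0 + t • (EuclideanSpace.single (1 : Fin 2) (1:ℝ)) := by
  ext i
  fin_cases i <;>
    simp [mk2, PiLp.add_apply, PiLp.smul_apply, EuclideanSpace.single_apply]

lemma mk2_line' (x₂ t : ℝ) :
    mk2 t x₂ = mk2 0 x₂ + t • (EuclideanSpace.single (0 : Fin 2) (1:ℝ)) := by
  ext i
  fin_cases i <;>
    simp [mk2, PiLp.add_apply, PiLp.smul_apply, EuclideanSpace.single_apply]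

lemma crossing_bound {E : Type*} [NormedAddCommGroup E] [NormedSpace ℝ E] [CompleteSpace E]
    {w₀ d : ℝ} (hw₀ : 0 < w₀) (φ φ' : ℝ → E) (V : ℝ → ℝ) {p q : ℝ} (hpq : p < q)
    (hder : ∀ t ∈ Icc p q, HasDerivAt φ (φ' t) t)
    (hφ'c : ContinuousOn φ' (Icc p q)) (hVc : ContinuousOn V (Icc p q))
    (hV0 : ∀ t ∈ Icc p q, 0 ≤ V t) (hVlb : ∀ t ∈ Ioo p q, w₀ ≤ V t)
    (hgap : d ≤ ‖φ q - φ p‖) :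
    ENNReal.ofReal (Real.sqrt (2*w₀) * d)
      ≤ ∫⁻ t in Ioo p q, ENNReal.ofReal ((1/2) * ‖φ' t‖^2 + V t) := by
  set c := Real.sqrt (2*w₀) with hc
  have hc0 : 0 ≤ c := Real.sqrt_nonneg _
  set h : ℝ → ℝ := fun t => (1/2) * ‖φ' t‖^2 + V t with hh
  have hhc : ContinuousOn h (Icc p q) := by
    apply ContinuousOn.add _ hVc
    exact (continuous_const.continuousOn).mul ((hφ'c.norm).pow 2)
  have hhint : IntegrableOn h (Ioo p q) :=
    (hhc.integrableOn_Icc).mono_set Ioo_subset_Icc_self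
  have hnint : IntegrableOn (fun t => c * ‖φ' t‖) (Ioo p q) :=
    (((continuous_const.continuousOn).mul hφ'c.norm).integrableOn_Icc).mono_set
      Ioo_subset_Icc_self
  have hIccu : uIcc p q = Icc p q := uIcc_of_le hpq.le
  have hphiint : IntervalIntegrable φ' volume p q := by
    apply ContinuousOn.intervalIntegrable; rwa [hIccu]
  have hftc : ∫ t in p..q, φ' t = φ q - φ p := by
    apply intervalIntegral.integral_eq_sub_of_hasDerivAt _ hphiint
    intro t ht; exact hder t (hIccu ▸ ht)
  have hnorm : d ≤ ∫ t in Ioo p q, ‖φ' t‖ := by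
    calc d ≤ ‖φ q - φ p‖ := hgap
    _ = ‖∫ t in p..q, φ' t‖ := by rw [hftc]
    _ ≤ ∫ t in p..q, ‖φ' t‖ := intervalIntegral.norm_integral_le_integral_norm hpq.le
    _ = ∫ t in Ioo p q, ‖φ' t‖ := by
        rw [intervalIntegral.integral_of_le hpq.le, integral_Ioc_eq_integral_Ioo]
  have hmono : ∫ t in Ioo p q, c * ‖φ' t‖ ≤ ∫ t in Ioo p q, h t := by
    apply setIntegral_mono_on hnint hhint measurableSet_Ioo
    intro t ht
    have hV := hVlb t ht
    have hsq : c^2 = 2*w₀ := Real.sq_sqrt (by positivity)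
    show c * ‖φ' t‖ ≤ (1/2) * ‖φ' t‖^2 + V t
    nlinarith [sq_nonneg (‖φ' t‖ - c), norm_nonneg (φ' t)]
  have hreal : c * d ≤ ∫ t in Ioo p q, h t := by
    calc c * d ≤ c * ∫ t in Ioo p q, ‖φ' t‖ := mul_le_mul_of_nonneg_left hnorm hc0
    _ = ∫ t in Ioo p q, c * ‖φ' t‖ := by rw [integral_const_mul]
    _ ≤ _ := hmono
  have h0 : 0 ≤ᶠ[ae (volume.restrict (Ioo p q))] h := by
    filter_upwards [ae_restrict_mem measurableSet_Ioo] with t ht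
    have := hV0 t (Ioo_subset_Icc_self ht)
    positivity
  calc ENNReal.ofReal (c * d) ≤ ENNReal.ofReal (∫ t in Ioo p q, h t) :=
        ENNReal.ofReal_le_ofReal hreal
  _ = ∫⁻ t in Ioo p q, ENNReal.ofReal (h t) :=
        ofReal_integral_eq_lintegral_ofReal hhint h0

lemma column_bound (a : EuclideanSpace ℝ (Fin 2)) {r w₀ μ R : ℝ}
    (hr : 0 < r) (hw₀ : 0 < w₀) (hR : 0 < R)
    (W : EuclideanSpace ℝ (Fin 2) → ℝ) (hWcont : Continuous W) (hWnonneg : ∀ v, 0 ≤ W v)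
    (hWlb : ∀ v : EuclideanSpace ℝ (Fin 2), 0 ≤ v 0 → r / 4 ≤ ‖v - a‖ → w₀ ≤ W v)
    (u : EuclideanSpace ℝ (Fin 2) → EuclideanSpace ℝ (Fin 2))
    {Ω : Set (EuclideanSpace ℝ (Fin 2))}
    (hΩ : Ω = {x | x 0 ∈ Set.Ioo 0 (μ * R) ∧ x 1 ∈ Set.Ioo (-R) R})
    (hdiff : ∀ x ∈ Ω, DifferentiableAt ℝ u x)
    (hfc : ContinuousOn (fderiv ℝ u) Ω)
    (hpos : ∀ x ∈ Ω, 0 ≤ u x 0)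
    (hRR₀ : r / (4 * Real.sqrt (2 * w₀)) ≤ R)
    {x₁ : ℝ} (hx₁ : x₁ ∈ Ioo 0 (μ * R)) {x₂ : ℝ} (hx₂ : x₂ ∈ Ioo (-R) R)
    (hbad : r / 2 ≤ ‖u (mk2 x₁ x₂) - a‖) :
    ENNReal.ofReal (r * Real.sqrt (2 * w₀) / 4)
      ≤ ∫⁻ t in Ioo (-R) R, ENNReal.ofReal
          ((1/2) * ‖(fderiv ℝ u (mk2 x₁ t)) (EuclideanSpace.single (1:Fin 2) (1:ℝ))‖^2
            + W (u (mk2 x₁ t))) := by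
  have hsq2 : Real.sqrt (2*w₀) ^ 2 = 2*w₀ := Real.sq_sqrt (by positivity)
  have hsqpos : (0:ℝ) < Real.sqrt (2*w₀) := Real.sqrt_pos.2 (by positivity)
  set e₁ : EuclideanSpace ℝ (Fin 2) := EuclideanSpace.single (1:Fin 2) (1:ℝ) with he₁
  set φ : ℝ → EuclideanSpace ℝ (Fin 2) := fun t => u (mk2 x₁ t) with hφ
  set φ' : ℝ → EuclideanSpace ℝ (Fin 2) := fun t => (fderiv ℝ u (mk2 x₁ t)) e₁ with hφ'
  set ψ : ℝ → ℝ := fun t => ‖φ t - a‖ with hψ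
  have hmem : ∀ t ∈ Ioo (-R) R, mk2 x₁ t ∈ Ω := by
    intro t ht; rw [hΩ]; exact ⟨hx₁, ht⟩
  have hℓc : Continuous fun t : ℝ => mk2 x₁ t := by
    have : (fun t : ℝ => mk2 x₁ t) = fun t => mk2 x₁ 0 + t • e₁ := funext (mk2_line x₁)
    rw [this]
    exact continuous_const.add (continuous_id.smul continuous_const)
  have hφd : ∀ t ∈ Ioo (-R) R, HasDerivAt φ (φ' t) t := by
    intro t ht
    have hude := hdiff _ (hmem t ht)
    have hl : HasDerivAt (fun s : ℝ => mk2 x₁ s) e₁ t := by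
      have : (fun s : ℝ => mk2 x₁ s) = fun s => mk2 x₁ 0 + s • e₁ := funext (mk2_line x₁)
      rw [this]
      simpa using ((hasDerivAt_id t).smul_const e₁).const_add (mk2 x₁ 0)
    exact hude.hasFDerivAt.comp_hasDerivAt t hl
  have hφcont : ∀ S ⊆ Ioo (-R) R, ContinuousOn φ S := by
    intro S hS t ht
    exact ((hφd t (hS ht)).continuousAt).continuousWithinAt
  have hφ'cont : ∀ S ⊆ Ioo (-R) R, ContinuousOn φ' S := by
    intro S hS
    have h1 : ContinuousOn (fun t => fderiv ℝ u (mk2 x₁ t)) S := by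
      apply hfc.comp hℓc.continuousOn
      intro t ht; exact hmem t (hS ht)
    exact h1.clm_apply continuousOn_const
  have hIooss : ∀ {p q : ℝ}, p ∈ Ioo (-R) R → q ∈ Ioo (-R) R → Icc p q ⊆ Ioo (-R) R := by
    intro p q hp hq s hs
    exact ⟨lt_of_lt_of_le hp.1 hs.1, lt_of_le_of_lt hs.2 hq.2⟩
  by_cases hA : ∀ t ∈ Ioo (-R) R, r/4 ≤ ψ t
  · have hlb : ∀ t ∈ Ioo (-R) R, ENNReal.ofReal w₀
        ≤ ENNReal.ofReal ((1/2) * ‖φ' t‖^2 + W (φ t)) := by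
      intro t ht
      have hW : w₀ ≤ W (φ t) := hWlb _ (hpos _ (hmem t ht)) (hA t ht)
      apply ENNReal.ofReal_le_ofReal
      nlinarith [sq_nonneg ‖φ' t‖, norm_nonneg (φ' t)]
    calc ENNReal.ofReal (r * Real.sqrt (2*w₀) / 4)
        ≤ ENNReal.ofReal (w₀ * (R - -R)) := by
          apply ENNReal.ofReal_le_ofReal
          have h1 : r ≤ R * (4 * Real.sqrt (2*w₀)) := (div_le_iff₀ (by positivity)).1 hRR₀
          nlinarith
      _ = ENNReal.ofReal w₀ * volume (Ioo (-R) R) := by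
          rw [Real.volume_Ioo, ← ENNReal.ofReal_mul hw₀.le]
      _ = ∫⁻ _ in Ioo (-R) R, ENNReal.ofReal w₀ := (setLIntegral_const _ _).symm
      _ ≤ _ := by
          apply lintegral_mono_ae
          filter_upwards [ae_restrict_mem measurableSet_Ioo] with t ht
          exact hlb t ht
  · push_neg at hA
    obtain ⟨t₀, ht₀, ht₀lt⟩ := hA
    have hψx₂ : r/2 ≤ ψ x₂ := hbad
    have key : ∀ p q : ℝ, p ∈ Ioo (-R) R → q ∈ Ioo (-R) R → p < q →
        (∀ t ∈ Ioo p q, r/4 ≤ ψ t) → r/4 ≤ ‖φ q - φ p‖ →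
        ENNReal.ofReal (r * Real.sqrt (2*w₀) / 4)
          ≤ ∫⁻ t in Ioo (-R) R, ENNReal.ofReal ((1/2) * ‖φ' t‖^2 + W (φ t)) := by
      intro p q hp hq hpq hmid hgap
      have hsub := hIooss hp hq
      have hcb := crossing_bound hw₀ φ φ' (fun t => W (φ t)) hpq
        (fun t ht => hφd t (hsub ht)) (hφ'cont _ hsub)
        ((hWcont.comp_continuousOn (hφcont _ hsub)))
        (fun t _ => hWnonneg _)
        (fun t ht => hWlb _ (hpos _ (hmem t (hsub (Ioo_subset_Icc_self ht)))) (hmid t ht))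
        hgap
      calc ENNReal.ofReal (r * Real.sqrt (2*w₀) / 4)
          = ENNReal.ofReal (Real.sqrt (2*w₀) * (r/4)) := by ring_nf
        _ ≤ ∫⁻ t in Ioo p q, ENNReal.ofReal ((1/2) * ‖φ' t‖^2 + W (φ t)) := hcb
        _ ≤ _ := lintegral_mono_set (fun t ht => hsub (Ioo_subset_Icc_self ht))
    have hgapcalc : ∀ s t : ℝ, ψ t - ψ s ≤ ‖φ t - φ s‖ := by
      intro s t
      have h1 : ‖φ t - a‖ - ‖φ s - a‖ ≤ ‖(φ t - a) - (φ s - a)‖ := norm_sub_norm_le _ _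
      simpa [sub_sub_sub_cancel_right] using h1
    rcases lt_trichotomy t₀ x₂ with hlt | heq | hgt
    · set K : Set ℝ := {t ∈ Icc t₀ x₂ | ψ t ≤ r/4} with hK
      have hψcont : ContinuousOn ψ (Icc t₀ x₂) :=
        ((hφcont _ (hIooss ht₀ hx₂)).sub continuousOn_const).norm
      have hKc : IsClosed K :=
        hψcont.preimage_isClosed_of_isClosed isClosed_Icc isClosed_Iic
      have hKne : K.Nonempty := ⟨t₀, ⟨le_refl _, hlt.le⟩, ht₀lt.le⟩
      have hKbdd : BddAbove K := ⟨x₂, fun t ht => ht.1.2⟩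
      set s₁ := sSup K with hs₁
      have hs₁K : s₁ ∈ K := hKc.csSup_mem hKne hKbdd
      have hs₁lt : s₁ < x₂ := by
        rcases lt_or_eq_of_le hs₁K.1.2 with h | h
        · exact h
        · exfalso; have := hs₁K.2; rw [h] at this; linarith [hψx₂]
      have hs₁mem : s₁ ∈ Ioo (-R) R := hIooss ht₀ hx₂ hs₁K.1
      apply key s₁ x₂ hs₁mem hx₂ hs₁lt
      · intro t ht
        by_contra hcon
        push_neg at hcon
        have htK : t ∈ K := ⟨⟨le_trans hs₁K.1.1 ht.1.le, ht.2.le⟩, hcon.le⟩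
        exact absurd (le_csSup hKbdd htK) (not_le.2 ht.1)
      · have := hgapcalc s₁ x₂
        have h2 := hs₁K.2
        linarith [hψx₂]
    · exfalso; rw [heq] at ht₀lt; linarith [hψx₂]
    · set K : Set ℝ := {t ∈ Icc x₂ t₀ | ψ t ≤ r/4} with hK
      have hψcont : ContinuousOn ψ (Icc x₂ t₀) :=
        ((hφcont _ (hIooss hx₂ ht₀)).sub continuousOn_const).norm
      have hKc : IsClosed K :=
        hψcont.preimage_isClosed_of_isClosed isClosed_Icc isClosed_Iic
      have hKne : K.Nonempty := ⟨t₀, ⟨hgt.le, le_refl _⟩, ht₀lt.le⟩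
      have hKbdd : BddBelow K := ⟨x₂, fun t ht => ht.1.1⟩
      set s₁ := sInf K with hs₁
      have hs₁K : s₁ ∈ K := hKc.csInf_mem hKne hKbdd
      have hs₁gt : x₂ < s₁ := by
        rcases lt_or_eq_of_le hs₁K.1.1 with h | h
        · exact h
        · exfalso; have := hs₁K.2; rw [← h] at this; linarith [hψx₂]
      have hs₁mem : s₁ ∈ Ioo (-R) R := hIooss hx₂ ht₀ hs₁K.1
      apply key x₂ s₁ hx₂ hs₁mem hs₁gt
      · intro t ht
        by_contra hcon
        push_neg at hcon
        have htK : t ∈ K := ⟨⟨ht.1.le, le_trans ht.2.le hs₁K.1.2⟩, hcon.le⟩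
        exact absurd (csInf_le hKbdd htK) (not_le.2 ht.2)
      · have h1 : ψ x₂ - ψ s₁ ≤ ‖φ x₂ - φ s₁‖ := hgapcalc s₁ x₂
        have h2 : ‖φ x₂ - φ s₁‖ = ‖φ s₁ - φ x₂‖ := norm_sub_rev _ _
        have h3 := hs₁K.2
        linarith [hψx₂]

set_option maxHeartbeats 2000000 in
theorem bad_set_measure_bound
    (a : EuclideanSpace ℝ (Fin 2)) (r C w₀ μ R : ℝ)
    (hr : 0 < r) (hC : 0 < C) (hw₀ : 0 < w₀) (hμ : 0 < μ) (hR : 0 < R)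
    (W : EuclideanSpace ℝ (Fin 2) → ℝ)
    (hWcont : Continuous W) (hWnonneg : ∀ v, 0 ≤ W v)
    (hWlb : ∀ v : EuclideanSpace ℝ (Fin 2), 0 ≤ v 0 → r / 4 ≤ ‖v - a‖ → w₀ ≤ W v)
    (Ω : Set (EuclideanSpace ℝ (Fin 2)))
    (hΩ : Ω = {x | x 0 ∈ Set.Ioo 0 (μ * R) ∧ x 1 ∈ Set.Ioo (-R) R})
    (u : EuclideanSpace ℝ (Fin 2) → EuclideanSpace ℝ (Fin 2))
    (huC1 : ContDiffOn ℝ 1 u (closure Ω))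
    (hpos : ∀ x ∈ Ω, 0 ≤ u x 0)
    (hen : energy Ω W u ≤ C * R)
    (iR : Set ℝ)
    (hiR : iR = {x₁ ∈ Set.Ioo 0 (μ * R) |
      ∃ x₂ ∈ Set.Ioo (-R) R, r / 2 ≤ ‖u (mk2 x₁ x₂) - a‖}) :
    (r / (4 * Real.sqrt (2 * w₀)) ≤ R →
      volume iR ≤ ENNReal.ofReal (2 * Real.sqrt 2 * C * R / (r * Real.sqrt w₀))) ∧
    (r / (4 * Real.sqrt (2 * w₀)) ≤ R →
      2 * Real.sqrt 2 * C / (r * Real.sqrt w₀) < μ →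
      ∃ x₁ ∈ Set.Ioo 0 (μ * R),
        x₁ ≤ 2 * Real.sqrt 2 * C / (r * Real.sqrt w₀) * R ∧
        ∀ x₂ ∈ Set.Ioo (-R) R, ‖u (mk2 x₁ x₂) - a‖ < r / 2) := by
  -- notation
  set e₀ : EuclideanSpace ℝ (Fin 2) := EuclideanSpace.single (0:Fin 2) (1:ℝ) with he₀
  set e₁ : EuclideanSpace ℝ (Fin 2) := EuclideanSpace.single (1:Fin 2) (1:ℝ) with he₁
  set κ : ℝ := r * Real.sqrt (2*w₀) / 4 with hκ
  set η : ℝ := 2 * Real.sqrt 2 * C / (r * Real.sqrt w₀) with hη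
  have hsq2 : Real.sqrt (2*w₀) ^ 2 = 2*w₀ := Real.sq_sqrt (by positivity)
  have hsqw : (0:ℝ) < Real.sqrt w₀ := Real.sqrt_pos.2 hw₀
  have hsq2w : (0:ℝ) < Real.sqrt (2*w₀) := Real.sqrt_pos.2 (by positivity)
  have hsplit : Real.sqrt (2*w₀) = Real.sqrt 2 * Real.sqrt w₀ := Real.sqrt_mul (by norm_num) _
  have hsqrt2 : Real.sqrt 2 ^ 2 = 2 := Real.sq_sqrt (by norm_num)
  have hκpos : 0 < κ := by positivity
  have hηpos : 0 < η := by positivity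
  have hκη : κ * (η * R) = C * R := by
    rw [hκ, hη, hsplit]
    field_simp
    linear_combination 2 * hsqrt2
  -- Ω basics
  have hproj : ∀ i : Fin 2, Continuous fun x : EuclideanSpace ℝ (Fin 2) => x i := by
    intro i
    exact (EuclideanSpace.proj i : EuclideanSpace ℝ (Fin 2) →L[ℝ] ℝ).continuous
  have hΩeq : Ω = (fun x : EuclideanSpace ℝ (Fin 2) => x 0) ⁻¹' (Ioo 0 (μ*R))
      ∩ (fun x : EuclideanSpace ℝ (Fin 2) => x 1) ⁻¹' (Ioo (-R) R) := by
    rw [hΩ]; rfl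
  have hΩopen : IsOpen Ω := by
    rw [hΩeq]
    exact (isOpen_Ioo.preimage (hproj 0)).inter (isOpen_Ioo.preimage (hproj 1))
  have hΩmeas : MeasurableSet Ω := hΩopen.measurableSet
  have hΩconv : Convex ℝ Ω := by
    rw [hΩeq]
    exact ((convex_Ioo (0:ℝ) (μ*R)).linear_preimage
        (EuclideanSpace.proj (0 : Fin 2) : EuclideanSpace ℝ (Fin 2) →L[ℝ] ℝ).toLinearMap).inter
      ((convex_Ioo (-R) R).linear_preimage
        (EuclideanSpace.proj (1 : Fin 2) : EuclideanSpace ℝ (Fin 2) →L[ℝ] ℝ).toLinearMap)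
  have hΩbd : Bornology.IsBounded Ω := by
    apply (Metric.isBounded_closedBall (x := (0 : EuclideanSpace ℝ (Fin 2)))
      (r := Real.sqrt ((μ*R)^2 + R^2))).subset
    intro x hx
    rw [hΩ] at hx
    simp only [Metric.mem_closedBall, dist_zero_right]
    rw [EuclideanSpace.norm_eq]
    apply Real.sqrt_le_sqrt
    rw [Fin.sum_univ_two]
    obtain ⟨⟨h0a, h0b⟩, ⟨h1a, h1b⟩⟩ := hx
    have hx0 : ‖x 0‖^2 ≤ (μ*R)^2 := by
      rw [Real.norm_eq_abs, sq_abs]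
      nlinarith [mul_pos hμ hR]
    have hx1 : ‖x 1‖^2 ≤ R^2 := by
      rw [Real.norm_eq_abs, sq_abs]
      nlinarith
    linarith
  have hcls : IsCompact (closure Ω) := hΩbd.isCompact_closure
  have hΩvol : volume Ω ≠ ⊤ :=
    (lt_of_le_of_lt (measure_mono subset_closure) hcls.measure_lt_top).ne
  have hΩne : (mk2 (μ*R/2) 0) ∈ Ω := by
    rw [hΩ]
    constructor
    · rw [mk2_zero]; constructor <;> nlinarith [mul_pos hμ hR]
    · rw [mk2_one]; constructor <;> linarith
  -- differentiability facts
  have hCΩ : ContDiffOn ℝ 1 u Ω := huC1.mono subset_closure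
  have hdiff : ∀ x ∈ Ω, DifferentiableAt ℝ u x := by
    intro x hx
    exact (hCΩ.contDiffAt (hΩopen.mem_nhds hx)).differentiableAt one_ne_zero
  have hfc : ContinuousOn (fderiv ℝ u) Ω :=
    hCΩ.continuousOn_fderiv_of_isOpen hΩopen le_rfl
  have hucont : ContinuousOn u Ω := fun x hx => (hdiff x hx).continuousAt.continuousWithinAt
  -- the three integrands
  set gfun : EuclideanSpace ℝ (Fin 2) → ℝ :=
    fun x => (1/2) * ‖(fderiv ℝ u x) e₁‖^2 + W (u x) with hgfun
  set hfun : EuclideanSpace ℝ (Fin 2) → ℝ :=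
    fun x => (1/2) * ‖(fderiv ℝ u x) e₀‖^2 with hhfun
  set ffun : EuclideanSpace ℝ (Fin 2) → ℝ :=
    fun x => (1/2 : ℝ) * hsNorm (fderiv ℝ u x) ^ 2 + W (u x) with hffun
  have hsum : ∀ L : EuclideanSpace ℝ (Fin 2) →L[ℝ] EuclideanSpace ℝ (Fin 2),
      hsNorm L ^ 2 = ‖L e₀‖^2 + ‖L e₁‖^2 := by
    intro L
    rw [hsNorm, Real.sq_sqrt (by positivity)]
    rw [Fin.sum_univ_two]
  have hfeq : ∀ x, ffun x = hfun x + gfun x := by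
    intro x
    simp only [hffun, hhfun, hgfun]
    rw [hsum]; ring
  have hffnonneg : ∀ x, 0 ≤ ffun x := by
    intro x
    have h1 : 0 ≤ hsNorm (fderiv ℝ u x) := Real.sqrt_nonneg _
    have := hWnonneg (u x)
    simp only [hffun]; positivity
  have hgnonneg : ∀ x, 0 ≤ gfun x := by
    intro x; have := hWnonneg (u x); simp only [hgfun]; positivity
  have hhnonneg : ∀ x, 0 ≤ hfun x := by intro x; simp only [hhfun]; positivity
  -- continuity of integrands on Ω
  have hhsc : Continuous fun L : EuclideanSpace ℝ (Fin 2) →L[ℝ] EuclideanSpace ℝ (Fin 2) =>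
      hsNorm L := by
    unfold hsNorm
    apply Real.continuous_sqrt.comp
    apply continuous_finset_sum
    intro i _
    exact ((ContinuousLinearMap.apply ℝ _ (EuclideanSpace.single i (1:ℝ))).continuous.norm.pow 2)
  have hgc : ContinuousOn gfun Ω := by
    apply ContinuousOn.add _ (hWcont.comp_continuousOn hucont)
    exact continuousOn_const.mul (((hfc.clm_apply continuousOn_const).norm).pow 2)
  have hhc : ContinuousOn hfun Ω :=
    continuousOn_const.mul (((hfc.clm_apply continuousOn_const).norm).pow 2)
  have hfcΩ : ContinuousOn ffun Ω := by
    apply ContinuousOn.add _ (hWcont.comp_continuousOn hucont)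
    exact continuousOn_const.mul ((hhsc.comp_continuousOn hfc).pow 2)
  -- integrability of ffun on Ω via boundedness on the compact closure
  have hudq : UniqueDiffOn ℝ (closure Ω) := by
    apply uniqueDiffOn_convex hΩconv.closure
    exact ⟨_, interior_maximal subset_closure hΩopen hΩne⟩
  have hfwc : ContinuousOn (fun x => fderivWithin ℝ u (closure Ω) x) (closure Ω) :=
    huC1.continuousOn_fderivWithin hudq le_rfl
  set Fbar : EuclideanSpace ℝ (Fin 2) → ℝ :=
    fun x => (1/2 : ℝ) * hsNorm (fderivWithin ℝ u (closure Ω) x) ^ 2 + W (u x) with hFbar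
  have hFbarc : ContinuousOn Fbar (closure Ω) := by
    apply ContinuousOn.add _ (hWcont.comp_continuousOn huC1.continuousOn)
    exact continuousOn_const.mul ((hhsc.comp_continuousOn hfwc).pow 2)
  obtain ⟨M, hM⟩ := hcls.exists_bound_of_continuousOn hFbarc
  have hfFbar : ∀ x ∈ Ω, ffun x = Fbar x := by
    intro x hx
    have : fderivWithin ℝ u (closure Ω) x = fderiv ℝ u x :=
      fderivWithin_of_mem_nhds (mem_nhds_iff.2 ⟨Ω, subset_closure, hΩopen, hx⟩)
    simp only [hffun, hFbar, this]
  have hfint : IntegrableOn ffun Ω := by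
    have hfin : IsFiniteMeasure (volume.restrict Ω) :=
      ⟨by rwa [Measure.restrict_apply_univ, lt_top_iff_ne_top]⟩
    apply Integrable.mono' (integrable_const M) (hfcΩ.aestronglyMeasurable hΩmeas)
    filter_upwards [ae_restrict_mem hΩmeas] with x hx
    rw [Real.norm_of_nonneg (hffnonneg x), hfFbar x hx]
    calc Fbar x ≤ |Fbar x| := le_abs_self _
    _ = ‖Fbar x‖ := rfl
    _ ≤ M := hM x (subset_closure hx)
  -- energy bound in ENNReal form
  have hE1 : ∫⁻ x in Ω, ENNReal.ofReal (ffun x) ≤ ENNReal.ofReal (C*R) := by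
    rw [← ofReal_integral_eq_lintegral_ofReal hfint
      (by filter_upwards with x using hffnonneg x)]
    exact ENNReal.ofReal_le_ofReal hen
  -- indicator versions (globally measurable)
  set Gf := Ω.indicator ffun with hGf
  set Gg := Ω.indicator gfun with hGg
  set Gh := Ω.indicator hfun with hGh
  have hGfm : Measurable Gf := measurable_indicator_open hΩopen hfcΩ
  have hGgm : Measurable Gg := measurable_indicator_open hΩopen hgc
  have hGhm : Measurable Gh := measurable_indicator_open hΩopen hhc
  have hGfsplit : ∀ x, ENNReal.ofReal (Gf x)
      = ENNReal.ofReal (Gh x) + ENNReal.ofReal (Gg x) := by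
    intro x
    by_cases hx : x ∈ Ω
    · simp only [hGf, hGg, hGh, Set.indicator_of_mem hx]
      rw [hfeq x, ENNReal.ofReal_add (hhnonneg x) (hgnonneg x)]
    · simp [hGf, hGg, hGh, Set.indicator_of_notMem hx]
  have hlif : ∫⁻ x in Ω, ENNReal.ofReal (ffun x) = ∫⁻ x, ENNReal.ofReal (Gf x) := by
    rw [← lintegral_indicator hΩmeas]
    congr 1
    funext x
    by_cases hx : x ∈ Ω <;> simp [hGf, Set.indicator, hx]
  have hsplitint : ∫⁻ x, ENNReal.ofReal (Gf x)
      = (∫⁻ x, ENNReal.ofReal (Gh x)) + ∫⁻ x, ENNReal.ofReal (Gg x) := by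
    calc ∫⁻ x, ENNReal.ofReal (Gf x)
        = ∫⁻ x, (ENNReal.ofReal (Gh x) + ENNReal.ofReal (Gg x)) := lintegral_congr hGfsplit
    _ = _ := lintegral_add_left (hGhm.ennreal_ofReal) _
  -- transport to ℝ × ℝ
  set e : EuclideanSpace ℝ (Fin 2) ≃ᵐ ℝ × ℝ :=
    (MeasurableEquiv.toLp 2 (Fin 2 → ℝ)).symm.trans MeasurableEquiv.finTwoArrow with he
  have hepres : MeasurePreserving e volume volume :=
    (volume_preserving_finTwoArrow ℝ).comp
      (EuclideanSpace.volume_preserving_symm_measurableEquiv_toLp (Fin 2))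
  have hesymm : MeasurePreserving (⇑e.symm) volume volume := MeasurePreserving.symm e hepres
  have hesymm_mk2 : ∀ p : ℝ × ℝ, e.symm p = mk2 p.1 p.2 := by
    intro p
    have h1 : e (mk2 p.1 p.2) = p := rfl
    have h2 := e.symm_apply_apply (mk2 p.1 p.2)
    rw [h1] at h2
    exact h2
  set Q : ℝ × ℝ → ENNReal := fun p => ENNReal.ofReal (Gg (e.symm p)) with hQ
  have hQm : Measurable Q := (hGgm.comp e.symm.measurable).ennreal_ofReal
  have htrans : ∫⁻ x, ENNReal.ofReal (Gg x) = ∫⁻ p, Q p :=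
    (hesymm.lintegral_comp_emb e.symm.measurableEmbedding
      (fun x => ENNReal.ofReal (Gg x))).symm
  set Ftil : ℝ → ENNReal := fun x₁ => ∫⁻ x₂, Q (x₁, x₂) with hFtil
  have hFm : Measurable Ftil := Measurable.lintegral_prod_right hQm
  have hTon : ∫⁻ p, Q p = ∫⁻ x₁, Ftil x₁ := by
    rw [Measure.volume_eq_prod]
    exact lintegral_prod Q hQm.aemeasurable
  -- master inequality
  have hkey : (∫⁻ x, ENNReal.ofReal (Gh x)) + (∫⁻ x₁, Ftil x₁) ≤ ENNReal.ofReal (C*R) := by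
    calc (∫⁻ x, ENNReal.ofReal (Gh x)) + (∫⁻ x₁, Ftil x₁)
        = ∫⁻ x, ENNReal.ofReal (Gf x) := by rw [hsplitint, htrans, hTon]
    _ = ∫⁻ x in Ω, ENNReal.ofReal (ffun x) := hlif.symm
    _ ≤ _ := hE1
  -- slices
  have hslice : ∀ x₁ ∈ Ioo 0 (μ*R),
      Ftil x₁ = ∫⁻ t in Ioo (-R) R, ENNReal.ofReal (gfun (mk2 x₁ t)) := by
    intro x₁ hx₁
    have hpt : ∀ x₂ : ℝ, Q (x₁, x₂)
        = (Ioo (-R) R).indicator (fun t => ENNReal.ofReal (gfun (mk2 x₁ t))) x₂ := by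
      intro x₂
      simp only [hQ]
      rw [hesymm_mk2]
      by_cases hx₂ : x₂ ∈ Ioo (-R) R
      · have hmm : mk2 x₁ x₂ ∈ Ω := by rw [hΩ]; exact ⟨hx₁, hx₂⟩
        rw [Set.indicator_of_mem hx₂]
        simp only [hGg, Set.indicator_of_mem hmm]
      · have hmm : mk2 x₁ x₂ ∉ Ω := by rw [hΩ]; intro h; exact hx₂ h.2
        rw [Set.indicator_of_notMem hx₂]
        simp only [hGg, Set.indicator_of_notMem hmm, ENNReal.ofReal_zero]
    calc Ftil x₁
        = ∫⁻ x₂, (Ioo (-R) R).indicator (fun t => ENNReal.ofReal (gfun (mk2 x₁ t))) x₂ :=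
          lintegral_congr hpt
    _ = _ := lintegral_indicator measurableSet_Ioo _
  -- column estimate
  have hcol : r / (4 * Real.sqrt (2 * w₀)) ≤ R →
      ∀ x₁ ∈ iR, ENNReal.ofReal κ ≤ Ftil x₁ := by
    intro hR₀ x₁ hx₁
    rw [hiR] at hx₁
    obtain ⟨hx₁Ioo, x₂, hx₂, hbad⟩ := hx₁
    rw [hslice x₁ hx₁Ioo, hκ]
    exact column_bound a hr hw₀ hR W hWcont hWnonneg hWlb u hΩ hdiff hfc hpos hR₀
      hx₁Ioo hx₂ hbad
  -- measurable superset of iR and its measure bound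
  set S : Set ℝ := {x₁ | ENNReal.ofReal κ ≤ Ftil x₁} with hS
  have hSm : MeasurableSet S := measurableSet_le measurable_const hFm
  have hiRS : r / (4 * Real.sqrt (2 * w₀)) ≤ R → iR ⊆ S := fun hR₀ x hx => hcol hR₀ x hx
  have hSbound : volume S ≤ ENNReal.ofReal (η*R) := by
    have h1 : ENNReal.ofReal κ * volume S ≤ ENNReal.ofReal (C*R) := by
      calc ENNReal.ofReal κ * volume S
          = ∫⁻ _ in S, ENNReal.ofReal κ := (setLIntegral_const _ _).symm
      _ ≤ ∫⁻ x₁ in S, Ftil x₁ := setLIntegral_mono hFm (fun x hx => hx)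
      _ ≤ ∫⁻ x₁, Ftil x₁ := setLIntegral_le_lintegral _ _
      _ ≤ ENNReal.ofReal (C*R) := le_trans (self_le_add_left _ _) hkey
    have h2 : volume S ≤ ENNReal.ofReal (C*R) / ENNReal.ofReal κ := by
      rw [ENNReal.le_div_iff_mul_le
        (Or.inl (ENNReal.ofReal_pos.2 hκpos).ne') (Or.inl ENNReal.ofReal_ne_top)]
      rwa [mul_comm]
    have h3 : (C*R)/κ = η*R := by
      rw [div_eq_iff hκpos.ne']
      linarith [hκη]
    calc volume S ≤ _ := h2
    _ = ENNReal.ofReal ((C*R)/κ) := (ENNReal.ofReal_div_of_pos hκpos).symm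
    _ = ENNReal.ofReal (η*R) := by rw [h3]
  have hηRform : η * R = 2 * Real.sqrt 2 * C * R / (r * Real.sqrt w₀) := by
    rw [hη]; ring
  constructor
  · -- part 1
    intro hR₀
    calc volume iR ≤ volume S := measure_mono (hiRS hR₀)
    _ ≤ ENNReal.ofReal (η*R) := hSbound
    _ = _ := by rw [hηRform]
  · -- part 2
    intro hR₀ hμη
    by_contra hcon
    push_neg at hcon
    have hηRμ : η*R < μ*R := mul_lt_mul_of_pos_right hμη hR
    have hηR0 : 0 < η*R := by positivity
    have hIocS : Ioc 0 (η*R) ⊆ iR := by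
      intro x hx
      have hxIoo : x ∈ Ioo 0 (μ*R) := ⟨hx.1, lt_of_le_of_lt hx.2 hηRμ⟩
      obtain ⟨x₂, hx₂, hb⟩ := hcon x hxIoo hx.2
      rw [hiR]; exact ⟨hxIoo, x₂, hx₂, hb⟩
    have hYlb : ENNReal.ofReal (C*R) ≤ ∫⁻ x₁, Ftil x₁ := by
      calc ENNReal.ofReal (C*R)
          = ENNReal.ofReal κ * ENNReal.ofReal (η*R) := by
            rw [← ENNReal.ofReal_mul hκpos.le, hκη]
      _ = ENNReal.ofReal κ * volume (Ioc 0 (η*R)) := by rw [Real.volume_Ioc, sub_zero]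
      _ = ∫⁻ _ in Ioc 0 (η*R), ENNReal.ofReal κ := (setLIntegral_const _ _).symm
      _ ≤ ∫⁻ x₁ in Ioc 0 (η*R), Ftil x₁ :=
            setLIntegral_mono hFm (fun x hx => hcol hR₀ x (hIocS hx))
      _ ≤ ∫⁻ x₁, Ftil x₁ := setLIntegral_le_lintegral _ _
    have hYne : (∫⁻ x₁, Ftil x₁) ≠ ⊤ :=
      (lt_of_le_of_lt (le_trans (self_le_add_left _ _) hkey) ENNReal.ofReal_lt_top).ne
    have hX0 : ∫⁻ x, ENNReal.ofReal (Gh x) = 0 := by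
      have h1 : (∫⁻ x, ENNReal.ofReal (Gh x)) + (∫⁻ x₁, Ftil x₁)
          ≤ 0 + ∫⁻ x₁, Ftil x₁ := by
        rw [zero_add]; exact le_trans hkey hYlb
      exact le_zero_iff.1 ((ENNReal.add_le_add_iff_right hYne).1 h1)
    have hGh0 : ∀ᵐ x, ENNReal.ofReal (Gh x) = 0 :=
      (lintegral_eq_zero_iff (hGhm.ennreal_ofReal)).1 hX0
    have hderiv0 : ∀ x ∈ Ω, (fderiv ℝ u x) e₀ = 0 := by
      set T := Ω ∩ (fun x => (fderiv ℝ u x) e₀) ⁻¹' ({0}ᶜ) with hT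
      have hTopen : IsOpen T :=
        (hfc.clm_apply continuousOn_const).isOpen_inter_preimage hΩopen
          isOpen_compl_singleton
      have hTnull : volume T = 0 := by
        apply measure_mono_null _ (ae_iff.1 hGh0)
        intro x hx
        simp only [mem_setOf_eq]
        have hxΩ : x ∈ Ω := hx.1
        have hxne : (fderiv ℝ u x) e₀ ≠ 0 := hx.2
        have h2 : Gh x = hfun x := Set.indicator_of_mem hxΩ _
        have h3 : 0 < hfun x := by
          simp only [hhfun]
          have : 0 < ‖(fderiv ℝ u x) e₀‖ := norm_pos_iff.2 hxne
          positivity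
        rw [h2]
        exact (ENNReal.ofReal_pos.2 h3).ne'
      have hTe : T = ∅ := hTopen.eq_empty_of_measure_zero hTnull
      intro x hx
      by_contra hne
      have : x ∈ T := ⟨hx, hne⟩
      rw [hTe] at this
      exact this
    obtain ⟨x₂s, hx₂s, hbads⟩ := hcon (η*R) ⟨hηR0, hηRμ⟩ le_rfl
    have hconst : ∀ x₁ ∈ Ioo 0 (μ*R), u (mk2 x₁ x₂s) = u (mk2 (η*R) x₂s) := by
      intro x₁ hx₁
      set γ : ℝ → EuclideanSpace ℝ (Fin 2) := fun t => u (mk2 t x₂s) with hγ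
      have hγd : ∀ t ∈ Ioo 0 (μ*R),
          HasFDerivWithinAt γ ((fun _ : ℝ => (0 : ℝ →L[ℝ] EuclideanSpace ℝ (Fin 2))) t)
            (Ioo 0 (μ*R)) t := by
        intro t ht
        have hmm : mk2 t x₂s ∈ Ω := by rw [hΩ]; exact ⟨ht, hx₂s⟩
        have hl : HasDerivAt (fun s : ℝ => mk2 s x₂s) e₀ t := by
          have hfe : (fun s : ℝ => mk2 s x₂s) = fun s => mk2 0 x₂s + s • e₀ :=
            funext (mk2_line' x₂s)
          rw [hfe]
          simpa using ((hasDerivAt_id t).smul_const e₀).const_add (mk2 0 x₂s)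
        have hd : HasDerivAt γ ((fderiv ℝ u (mk2 t x₂s)) e₀) t :=
          (hdiff _ hmm).hasFDerivAt.comp_hasDerivAt t hl
        rw [hderiv0 _ hmm] at hd
        have h0 : (ContinuousLinearMap.toSpanSingleton ℝ
            (0 : EuclideanSpace ℝ (Fin 2))) = 0 := by ext z; simp
        have hfd := hd.hasFDerivAt
        rw [h0] at hfd
        exact hfd.hasFDerivWithinAt
      have hball := Convex.norm_image_sub_le_of_norm_hasFDerivWithin_le (C := 0) hγd
        (fun t _ => by simp) (convex_Ioo 0 (μ*R)) ⟨hηR0, hηRμ⟩ hx₁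
      rw [zero_mul] at hball
      exact sub_eq_zero.1 (norm_le_zero_iff.1 hball)
    have hIooiR : Ioo 0 (μ*R) ⊆ iR := by
      intro x hx
      rw [hiR]
      refine ⟨hx, x₂s, hx₂s, ?_⟩
      rw [hconst x hx]
      exact hbads
    have hfin : ENNReal.ofReal (μ*R) ≤ ENNReal.ofReal (η*R) := by
      calc ENNReal.ofReal (μ*R) = volume (Ioo 0 (μ*R)) := by rw [Real.volume_Ioo, sub_zero]
      _ ≤ volume S := measure_mono (subset_trans hIooiR (hiRS hR₀))
      _ ≤ _ := hSbound
    have hle : μ*R ≤ η*R := (ENNReal.ofReal_le_ofReal_iff (by positivity)).1 hfin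
    nlinarith
end
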